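/- arXiv:2111.02547 — 4 statements merged into one kernel-verified Lean document; each statement's English description precedes it below -/
import Mathlib

section
/- Let f, g ∈ Cu(G) and let A be a van Hove sequence. If f ∈ Bap²_A(G) and g has null Fourier–Bohr spectrum with respect to A, then the Eberlein convolutions f ⊛_A g̃ and g ⊛_A f̃ exist and f ⊛_A g̃ = g ⊛_A f̃ = 0. -/
open MeasureTheory Filter Topology Pointwise ComplexConjugate
open scoped BigOperators

noncomputable section

variable {G : Type*} [AddCommGroup G] [UniformSpace G] [IsUniformAddGroup G]
  [LocallyCompactSpace G] [SecondCountableTopology G]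
  [MeasurableSpace G] [BorelSpace G]

/-- The van Hove `K`-boundary of a set `B`:
`∂^K B = (closure (B+K) \ B) ∪ (((G \ B) - K) ∩ closure B)`. -/
def vhBoundary (K B : Set G) : Set G :=
  (closure (B + K) \ B) ∪ ((Bᶜ - K) ∩ closure B)

/-- `A` is a van Hove sequence for the Haar measure `μ`: a sequence of compact sets of
positive measure such that for every compact `K` the relative measure of the van Hove
boundary tends to `0`. -/
def IsVanHove (μ : Measure G) (A : ℕ → Set G) : Prop :=
  (∀ n, IsCompact (A n)) ∧ (∀ n, 0 < μ (A n)) ∧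
    ∀ K : Set G, IsCompact K →
      Tendsto (fun n => μ (vhBoundary K (A n)) / μ (A n)) atTop (nhds 0)

/-- `f ∈ Cu(G)`: bounded and uniformly continuous. -/
def IsCu (f : G → ℂ) : Prop :=
  UniformContinuous f ∧ ∃ C : ℝ, ∀ x, ‖f x‖ ≤ C

/-- `χ` is a (continuous, unimodular) character of `G`, viewed as a `ℂ`-valued function. -/
def IsChar (χ : G → ℂ) : Prop :=
  Continuous χ ∧ (∀ x, ‖χ x‖ = 1) ∧ ∀ x y, χ (x + y) = χ x * χ y

/-- `f̃(x) = conj (f (-x))`. -/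
def tilde (f : G → ℂ) : G → ℂ := fun x => conj (f (-x))

/-- `(T_t f)(x) = f (x - t)`. -/
def shiftBy (t : G) (f : G → ℂ) : G → ℂ := fun x => f (x - t)

/-- Sup norm `‖f‖_∞`. -/
def supN (f : G → ℂ) : ℝ := ⨆ x, ‖f x‖

/-- The Fourier–Bohr coefficient `c_χ^A(f)` exists and equals `c`. -/
def FBTendsto (μ : Measure G) (A : ℕ → Set G) (χ f : G → ℂ) (c : ℂ) : Prop :=
  Tendsto (fun n => (μ (A n)).toReal⁻¹ • ∫ t in A n, conj (χ t) * f t ∂μ)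
    atTop (nhds c)

/-- The Fourier–Bohr coefficient of `f` at `χ` exists uniformly (w.r.t. `A`) with value `c`:
`lim_n |A_n|⁻¹ ∫_{x+A_n} conj (χ t) f t dθ(t) = c` uniformly in `x ∈ G`. -/
def FBUniform (μ : Measure G) (A : ℕ → Set G) (χ f : G → ℂ) (c : ℂ) : Prop :=
  TendstoUniformly
    (fun n (x : G) => (μ (A n)).toReal⁻¹ • ∫ t in x +ᵥ A n, conj (χ t) * f t ∂μ)
    (fun _ => c) atTop

/-- The Eberlein convolution `f ⊛_A g` exists and equals `F`:
for every `t`, `lim_n |A_n|⁻¹ ∫_{A_n} f s · g (t - s) dθ(s) = F t`. -/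
def EberleinTendsto (μ : Measure G) (A : ℕ → Set G) (f g F : G → ℂ) : Prop :=
  ∀ t : G, Tendsto (fun n => (μ (A n)).toReal⁻¹ • ∫ s in A n, f s * g (t - s) ∂μ)
    atTop (nhds (F t))

/-- The Besicovitch seminorm `‖f‖_{b,p,A}`. -/
def bNorm (μ : Measure G) (A : ℕ → Set G) (p : ℝ) (f : G → ℂ) : ℝ :=
  Filter.limsup
    (fun n => ((μ (A n)).toReal⁻¹ * ∫ t in A n, ‖f t‖ ^ p ∂μ) ^ (1 / p)) atTop

/-- `P` is a trigonometric polynomial: a finite linear combination of characters. -/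
def IsTrigPoly (P : G → ℂ) : Prop :=
  ∃ (k : ℕ) (c : Fin k → ℂ) (χ : Fin k → G → ℂ),
    (∀ j, IsChar (χ j)) ∧ P = fun x => ∑ j, c j * χ j x

/-- `f ∈ Bap^p_A(G)`: `f` can be approximated by trigonometric polynomials in `‖·‖_{b,p,A}`. -/
def BapP (μ : Measure G) (A : ℕ → Set G) (p : ℝ) (f : G → ℂ) : Prop :=
  ∀ ε : ℝ, 0 < ε → ∃ P : G → ℂ, IsTrigPoly P ∧ bNorm μ A p (fun x => f x - P x) < ε

/-- `f` is amenable w.r.t. `A` with mean `c`: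
`lim_n |A_n|⁻¹ ∫_{x+A_n} f dθ = c` uniformly in `x ∈ G`. -/
def Amenable (μ : Measure G) (A : ℕ → Set G) (f : G → ℂ) (c : ℂ) : Prop :=
  TendstoUniformly
    (fun n (x : G) => (μ (A n)).toReal⁻¹ • ∫ t in x +ᵥ A n, f t ∂μ)
    (fun _ => c) atTop


section Aux

lemma aux_int {E : Type*} [NormedAddCommGroup E] {μ : Measure G} {F : G → E} {C : ℝ}
    (hF : Continuous F) (hC : ∀ x, ‖F x‖ ≤ C) {S : Set G} (hS : μ S ≠ ⊤) :
    IntegrableOn F S μ := by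
  haveI : IsFiniteMeasure (μ.restrict S) :=
    ⟨by rw [Measure.restrict_apply_univ]; exact lt_top_iff_ne_top.2 hS⟩
  exact Integrable.mono' (integrable_const C) hF.aestronglyMeasurable (ae_of_all _ hC)

lemma aux_diff {μ : Measure G} {F : G → ℂ} {C : ℝ}
    (hF : Continuous F) (hC : ∀ x, ‖F x‖ ≤ C) {S T : Set G}
    (hSm : MeasurableSet S) (hTm : MeasurableSet T) (hS : μ S ≠ ⊤) (hT : μ T ≠ ⊤) :
    ‖(∫ s in S, F s ∂μ) - ∫ s in T, F s ∂μ‖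
      ≤ C * (μ (S \ T)).toReal + C * (μ (T \ S)).toReal := by
  have hST : μ (S \ T) ≠ ⊤ := fun h => hS (top_le_iff.1 (h ▸ measure_mono Set.diff_subset))
  have hTS : μ (T \ S) ≠ ⊤ := fun h => hT (top_le_iff.1 (h ▸ measure_mono Set.diff_subset))
  have hiS : ∫ s in S, F s ∂μ = (∫ s in S ∩ T, F s ∂μ) + ∫ s in S \ T, F s ∂μ := by
    rw [← setIntegral_union (Set.disjoint_left.2 fun x hx hx2 => hx2.2 hx.2)
      (hSm.diff hTm)
      (aux_int hF hC (fun h => hS (top_le_iff.1 (h ▸ measure_mono Set.inter_subset_left))))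
      (aux_int hF hC hST), Set.inter_union_diff]
  have hiT : ∫ s in T, F s ∂μ = (∫ s in S ∩ T, F s ∂μ) + ∫ s in T \ S, F s ∂μ := by
    rw [← setIntegral_union (Set.disjoint_left.2 fun x hx hx2 => hx2.2 hx.1)
      (hTm.diff hSm)
      (aux_int hF hC (fun h => hS (top_le_iff.1 (h ▸ measure_mono Set.inter_subset_left))))
      (aux_int hF hC hTS), Set.inter_comm, Set.inter_union_diff]
  rw [hiS, hiT]
  have heq : (∫ s in S ∩ T, F s ∂μ) + (∫ s in S \ T, F s ∂μ)
      - ((∫ s in S ∩ T, F s ∂μ) + ∫ s in T \ S, F s ∂μ)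
      = (∫ s in S \ T, F s ∂μ) - ∫ s in T \ S, F s ∂μ := by ring
  rw [heq]
  refine le_trans (norm_sub_le _ _) (add_le_add ?_ ?_)
  · exact norm_setIntegral_le_of_norm_le_const (lt_top_iff_ne_top.2 hST)
      (fun x _ => hC x)
  · exact norm_setIntegral_le_of_norm_le_const (lt_top_iff_ne_top.2 hTS)
      (fun x _ => hC x)

lemma aux_tendsto_conj {u : ℕ → ℂ} (h : Filter.Tendsto u Filter.atTop (nhds 0)) :
    Filter.Tendsto (fun n => conj (u n)) Filter.atTop (nhds 0) := by
  have h2 := (Complex.continuous_conj.tendsto 0).comp h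
  simpa [Function.comp_def] using h2

lemma aux_conj_smul (r : ℝ) (z : ℂ) : conj (r • z) = r • conj z := by
  simp [Complex.real_smul, map_mul]

end Aux

set_option maxRecDepth 8000 in
/-- if `f ∈ Bap²_A(G)` and `g` has null Fourier–Bohr spectrum w.r.t. `A`,
then `f ⊛_A g̃` and `g ⊛_A f̃` exist and vanish. -/
theorem stmt15 (μ : Measure G) [μ.IsAddHaarMeasure] (A : ℕ → Set G)
    (hA : IsVanHove μ A) (f g : G → ℂ) (hf : IsCu f) (hg : IsCu g)
    (hBap : BapP μ A 2 f)
    (hnull : ∀ χ : G → ℂ, IsChar χ → FBTendsto μ A χ g 0) :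
    EberleinTendsto μ A f (tilde g) (fun _ => 0) ∧
    EberleinTendsto μ A g (tilde f) (fun _ => 0) := by
  obtain ⟨hAcpt, hApos, hAvh⟩ := hA
  have hfc : Continuous f := hf.1.continuous
  obtain ⟨Cf, hCf⟩ := hf.2
  have hgc : Continuous g := hg.1.continuous
  obtain ⟨Cg, hCg⟩ := hg.2
  have hCfnn : 0 ≤ Cf := le_trans (norm_nonneg _) (hCf 0)
  have hCgnn : 0 ≤ Cg := le_trans (norm_nonneg _) (hCg 0)
  set B : ℕ → Set G := fun n => toMeasurable μ (A n) ∩ closure (A n) with hBdef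
  have hBm : ∀ n, MeasurableSet (B n) :=
    fun n => (measurableSet_toMeasurable μ (A n)).inter isClosed_closure.measurableSet
  have hABsub : ∀ n, A n ⊆ B n :=
    fun n => Set.subset_inter (subset_toMeasurable μ (A n)) subset_closure
  have hAfin : ∀ n, μ (A n) ≠ ⊤ := fun n => (hAcpt n).measure_lt_top.ne
  have hBfin : ∀ n, μ (B n) ≠ ⊤ := fun n =>
    fun h => (hAcpt n).closure.measure_lt_top.ne
      (top_le_iff.1 (h ▸ measure_mono Set.inter_subset_right))
  have hBres : ∀ n, μ.restrict (A n) = μ.restrict (B n) := by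
    intro n
    refine le_antisymm (Measure.restrict_mono (hABsub n) le_rfl) ?_
    calc μ.restrict (B n) ≤ μ.restrict (toMeasurable μ (A n)) :=
          Measure.restrict_mono Set.inter_subset_left le_rfl
      _ = μ.restrict (A n) := Measure.restrict_toMeasurable (hAfin n)
  have hBA : ∀ n, μ (B n) = μ (A n) := by
    intro n
    have h := congrArg (fun ν : Measure G => ν Set.univ) (hBres n)
    simpa [Measure.restrict_apply_univ] using h.symm
  set r : ℕ → ℝ := fun n => (μ (A n)).toReal⁻¹ with hrdef
  have hmpos : ∀ n, 0 < (μ (A n)).toReal :=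
    fun n => ENNReal.toReal_pos (hApos n).ne' (hAfin n)
  have hrnn : ∀ n, 0 ≤ r n := fun n => inv_nonneg.2 (hmpos n).le
  haveI hBfinM : ∀ n, IsFiniteMeasure (μ.restrict (B n)) := fun n =>
    ⟨by rw [Measure.restrict_apply_univ]; exact lt_top_iff_ne_top.2 (hBfin n)⟩
  -- the ratio of boundary measure to A_n measure tends to 0 (real version)
  have hratio : ∀ K : Set G, IsCompact K →
      Tendsto (fun n => r n * (μ (vhBoundary K (A n))).toReal) atTop (𝓝 0) := by
    intro K hK
    have h0 := hAvh K hK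
    have h1 := (ENNReal.tendsto_toReal ENNReal.zero_ne_top).comp h0
    simp only [Function.comp_def, ENNReal.toReal_div, ENNReal.toReal_zero] at h1
    refine h1.congr fun n => ?_
    rw [div_eq_mul_inv, mul_comm]
  have hvhfin : ∀ (K : Set G), IsCompact K → ∀ n, μ (vhBoundary K (A n)) ≠ ⊤ := by
    intro K hK n
    have hsub : vhBoundary K (A n) ⊆ closure (A n + K) ∪ closure (A n) := by
      rintro x (hx | hx)
      · exact Or.inl hx.1
      · exact Or.inr hx.2
    have hc : IsCompact (closure (A n + K) ∪ closure (A n)) :=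
      (((hAcpt n).add hK).closure).union (hAcpt n).closure
    exact fun h => hc.measure_lt_top.ne (top_le_iff.1 (h ▸ measure_mono hsub))
  -- translation lemma
  have htrans : ∀ (F : G → ℂ) (C : ℝ), Continuous F → (∀ x, ‖F x‖ ≤ C) → ∀ t : G,
      Tendsto (fun n => r n • ((∫ s in (fun x => x + t) ⁻¹' (B n), F s ∂μ)
        - ∫ s in B n, F s ∂μ)) atTop (𝓝 0) := by
    intro F C hFc hFC t
    have hCnn : 0 ≤ C := le_trans (norm_nonneg _) (hFC 0)
    set K : Set G := {t, 0, -t} with hKdef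
    have hKc : IsCompact K :=
      (((Set.finite_singleton (-t)).insert 0).insert t).isCompact
    set T' : ℕ → Set G := fun n => (fun x => x + t) ⁻¹' (B n) with hT'def
    have hT'm : ∀ n, MeasurableSet (T' n) := fun n => (hBm n).preimage (measurable_add_const t)
    have hT'fin : ∀ n, μ (T' n) ≠ ⊤ := by
      intro n
      rw [hT'def]
      rw [(measurePreserving_add_right μ t).measure_preimage (hBm n).nullMeasurableSet]
      exact hBfin n
    have hsub1 : ∀ n, T' n \ B n ⊆ vhBoundary K (A n) := by
      rintro n x ⟨hxt, hxB⟩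
      refine Or.inl ⟨?_, fun hxA => hxB (hABsub n hxA)⟩
      have h1 : x + t ∈ closure (A n) := hxt.2
      have h2 : x ∈ (fun y => y + -t) '' closure (A n) :=
        ⟨x + t, h1, by simp⟩
      have h3 := image_closure_subset_closure_image (continuous_add_right (-t)) h2
      refine closure_mono ?_ h3
      rintro y ⟨a, ha, rfl⟩
      exact Set.add_mem_add ha (by simp [hKdef])
    have hsub2 : ∀ n, B n \ T' n ⊆ vhBoundary K (A n) := by
      rintro n x ⟨hxB, hxt⟩
      refine Or.inr ⟨?_, hxB.2⟩
      have hmem : (x + t) - t ∈ (A n)ᶜ - K :=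
        Set.sub_mem_sub (fun h => hxt (hABsub n h)) (by simp [hKdef] : t ∈ K)
      simpa using hmem
    apply squeeze_zero_norm
      (a := fun n => (2 * C) * (r n * (μ (vhBoundary K (A n))).toReal))
    · intro n
      rw [norm_smul, Real.norm_eq_abs, abs_of_nonneg (hrnn n)]
      have hb := aux_diff hFc hFC (hT'm n) (hBm n) (hT'fin n) (hBfin n)
      have h1 : (μ (T' n \ B n)).toReal ≤ (μ (vhBoundary K (A n))).toReal :=
        ENNReal.toReal_mono (hvhfin K hKc n) (measure_mono (hsub1 n))
      have h2 : (μ (B n \ T' n)).toReal ≤ (μ (vhBoundary K (A n))).toReal :=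
        ENNReal.toReal_mono (hvhfin K hKc n) (measure_mono (hsub2 n))
      have h3 : ‖(∫ s in T' n, F s ∂μ) - ∫ s in B n, F s ∂μ‖
          ≤ (2 * C) * (μ (vhBoundary K (A n))).toReal := by
        refine le_trans hb ?_
        have := add_le_add (mul_le_mul_of_nonneg_left h1 hCnn)
          (mul_le_mul_of_nonneg_left h2 hCnn)
        linarith
      calc r n * ‖(∫ s in T' n, F s ∂μ) - ∫ s in B n, F s ∂μ‖
          ≤ r n * ((2 * C) * (μ (vhBoundary K (A n))).toReal) :=
            mul_le_mul_of_nonneg_left h3 (hrnn n)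
        _ = (2 * C) * (r n * (μ (vhBoundary K (A n))).toReal) := by ring
    · have h2 := (hratio K hKc).const_mul (2 * C)
      rwa [mul_zero] at h2
  -- substitution
  have hsubst : ∀ (F : G → ℂ) (t : G) (n : ℕ),
      ∫ s in B n, F (s - t) ∂μ = ∫ s in (fun x => x + t) ⁻¹' (B n), F s ∂μ := by
    intro F t n
    have h := (measurePreserving_add_right μ t).setIntegral_preimage_emb
      (Homeomorph.addRight t).measurableEmbedding (fun y => F (y - t)) (B n)
    simpa using h.symm
  -- null FB spectrum, conjugated and on B n
  have hFB : ∀ (χ : G → ℂ), IsChar χ →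
      Tendsto (fun n => r n • ∫ s in B n, χ s * conj (g s) ∂μ) atTop (𝓝 0) := by
    intro χ hχ
    have h0 : Tendsto (fun n => r n • ∫ s in A n, conj (χ s) * g s ∂μ)
        atTop (𝓝 0) := hnull χ hχ
    have h1 : Tendsto (fun n =>
        conj (r n • ∫ s in A n, conj (χ s) * g s ∂μ)) atTop (𝓝 0) :=
      aux_tendsto_conj h0
    refine h1.congr fun n => ?_
    rw [aux_conj_smul, ← integral_conj, hBres n]
    congr 1
    refine setIntegral_congr_fun (hBm n) fun s _ => ?_
    simp
  -- limit of character terms in the Eberlein convolution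
  have hchar : ∀ (χ : G → ℂ), IsChar χ → ∀ t : G,
      Tendsto (fun n => r n • ∫ s in B n, χ s * conj (g (s - t)) ∂μ) atTop (𝓝 0) := by
    intro χ hχ t
    obtain ⟨hχc, hχ1, hχm⟩ := hχ
    set F : G → ℂ := fun u => χ u * conj (g u) with hFdef
    have hFc : Continuous F := hχc.mul (continuous_star.comp hgc)
    have hFC : ∀ x, ‖F x‖ ≤ Cg := by
      intro x
      rw [hFdef]
      calc ‖χ x * conj (g x)‖ = ‖χ x‖ * ‖conj (g x)‖ := norm_mul _ _
        _ = ‖g x‖ := by rw [hχ1 x, one_mul, RCLike.norm_conj]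
        _ ≤ Cg := hCg x
    have L0 : Tendsto (fun n => r n • ∫ s in B n, F s ∂μ) atTop (𝓝 0) :=
      hFB χ ⟨hχc, hχ1, hχm⟩
    have L1 : Tendsto (fun n => r n • ∫ s in B n, F (s - t) ∂μ) atTop (𝓝 0) := by
      have hdt := htrans F Cg hFc hFC t
      have heq : (fun n => r n • ∫ s in B n, F (s - t) ∂μ)
          = fun n => (r n • ((∫ s in (fun x => x + t) ⁻¹' (B n), F s ∂μ)
              - ∫ s in B n, F s ∂μ)) + r n • ∫ s in B n, F s ∂μ := by
        funext n
        rw [hsubst F t n, smul_sub, sub_add_cancel]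
      rw [heq]
      simpa using hdt.add L0
    have hkey : ∀ s, χ s * conj (g (s - t)) = χ t * F (s - t) := by
      intro s
      have h1 : χ s = χ t * χ (s - t) := by
        rw [← hχm t (s - t)]
        congr 1
        abel
      rw [hFdef, h1]
      ring
    have h2 := L1.const_mul (χ t)
    rw [mul_zero] at h2
    refine h2.congr fun n => ?_
    simp_rw [hkey]
    rw [integral_const_mul, mul_smul_comm]
  -- main goal 1 (over B n, with explicit conj form)
  have main1 : ∀ t : G,
      Tendsto (fun n => r n • ∫ s in B n, f s * conj (g (s - t)) ∂μ) atTop (𝓝 0) := by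
    intro t
    rw [NormedAddCommGroup.tendsto_nhds_zero]
    intro ε hε
    have hcgt : Continuous fun s : G => conj (g (s - t)) :=
      continuous_star.comp (hgc.comp (continuous_id.sub continuous_const))
    have hcgtB : ∀ s : G, ‖conj (g (s - t))‖ ≤ Cg := fun s => by
      rw [RCLike.norm_conj]; exact hCg _
    set ε' := ε / (2 * (Cg + 1)) with hε'def
    have hε'pos : 0 < ε' := div_pos hε (by linarith)
    obtain ⟨P, hPtrig, hPnorm⟩ := hBap ε' hε'pos
    obtain ⟨k, c, χ, hχall, hPdef⟩ := hPtrig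
    have hPc : Continuous P := by
      rw [hPdef]; exact continuous_finset_sum _ fun j _ => continuous_const.mul (hχall j).1
    have hPB : ∀ x, ‖P x‖ ≤ ∑ j, ‖c j‖ := by
      intro x
      rw [hPdef]
      refine le_trans (norm_sum_le _ _) (le_of_eq (Finset.sum_congr rfl fun j _ => ?_))
      rw [norm_mul, (hχall j).2.1 x, mul_one]
    have hCPnn : (0:ℝ) ≤ ∑ j, ‖c j‖ := Finset.sum_nonneg fun j _ => norm_nonneg _
    have hMnn : (0:ℝ) ≤ Cf + ∑ j, ‖c j‖ := add_nonneg hCfnn hCPnn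
    have hufb : ∀ x, ‖f x - P x‖ ≤ Cf + ∑ j, ‖c j‖ :=
      fun x => le_trans (norm_sub_le _ _) (add_le_add (hCf x) (hPB x))
    have huc : Continuous fun x => f x - P x := hfc.sub hPc
    -- trig part limit
    have hc0 : Tendsto (fun n => r n • ∫ s in B n, P s * conj (g (s - t)) ∂μ)
        atTop (𝓝 0) := by
      have heach : ∀ j ∈ Finset.univ, Tendsto
          (fun n => c j * (r n • ∫ s in B n, χ j s * conj (g (s - t)) ∂μ))
          atTop (𝓝 (0:ℂ)) := by
        intro j _
        have h := (hchar (χ j) (hχall j) t).const_mul (c j)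
        rwa [mul_zero] at h
      have hsum := tendsto_finset_sum Finset.univ heach
      refine Tendsto.congr ?_ (by simpa using hsum)
      intro n
      have hI : ∀ j : Fin k, IntegrableOn (fun s => χ j s * conj (g (s - t))) (B n) μ := by
        intro j
        refine aux_int ((hχall j).1.mul hcgt) (C := Cg) (fun x => ?_) (hBfin n)
        rw [Pi.mul_apply, norm_mul, (hχall j).2.1, one_mul]
        exact hcgtB x
      calc ∑ j, c j * (r n • ∫ s in B n, χ j s * conj (g (s - t)) ∂μ)
          = r n • ∑ j, c j * ∫ s in B n, χ j s * conj (g (s - t)) ∂μ := by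
            simp_rw [mul_smul_comm]
            rw [← Finset.smul_sum]
        _ = r n • ∫ s in B n, P s * conj (g (s - t)) ∂μ := by
            congr 1
            simp_rw [← integral_const_mul]
            rw [← integral_finset_sum _ (fun j _ => (hI j).const_mul (c j))]
            refine setIntegral_congr_fun (hBm n) fun s _ => ?_
            rw [hPdef, Finset.sum_mul]
            exact Finset.sum_congr rfl fun j _ => (mul_assoc _ _ _).symm
    -- Cauchy–Schwarz bound for the remainder term
    have hbnd : ∀ n, ‖r n • ∫ s in B n, (f s - P s) * conj (g (s - t)) ∂μ‖
        ≤ Cg * ((r n * ∫ s in A n, ‖f s - P s‖ ^ (2:ℝ) ∂μ) ^ (1/(2:ℝ))) := by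
      intro n
      haveI := hBfinM n
      have hInn : (0:ℝ) ≤ ∫ s in A n, ‖f s - P s‖ ^ (2:ℝ) ∂μ :=
        integral_nonneg fun s => Real.rpow_nonneg (norm_nonneg _) _
      have hSnn : (0:ℝ) ≤ ∫ s in B n, ‖f s - P s‖ ∂μ :=
        integral_nonneg fun s => norm_nonneg _
      have hXnn : (0:ℝ) ≤ r n * ∫ s in B n, ‖f s - P s‖ ∂μ := mul_nonneg (hrnn n) hSnn
      have hmemu : MemLp (fun s => f s - P s) (ENNReal.ofReal 2) (μ.restrict (B n)) :=
        MemLp.of_bound huc.aestronglyMeasurable _ (ae_of_all _ hufb)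
      have hmem1 : MemLp (fun _ : G => (1:ℂ)) (ENNReal.ofReal 2) (μ.restrict (B n)) :=
        memLp_const 1
      have h1int : ∫ (_ : G) in B n, ‖(1:ℂ)‖ ^ (2:ℝ) ∂μ = (μ (B n)).toReal := by
        simp [Measure.restrict_apply_univ, Measure.real]
      have hCS := integral_mul_norm_le_Lp_mul_Lq
        Real.HolderConjugate.two_two hmemu hmem1
      rw [h1int] at hCS
      simp only [norm_one, mul_one, Real.one_rpow] at hCS
      have hCS' : (∫ s in B n, ‖f s - P s‖ ∂μ)
          ≤ (∫ s in A n, ‖f s - P s‖ ^ (2:ℝ) ∂μ) ^ (1/(2:ℝ))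
            * ((μ (B n)).toReal) ^ (1/(2:ℝ)) := by
        rw [hBres n]; exact hCS
      have hnorm1 : ‖∫ s in B n, (f s - P s) * conj (g (s - t)) ∂μ‖
          ≤ Cg * ∫ s in B n, ‖f s - P s‖ ∂μ := by
        calc ‖∫ s in B n, (f s - P s) * conj (g (s - t)) ∂μ‖
            ≤ ∫ s in B n, ‖(f s - P s) * conj (g (s - t))‖ ∂μ :=
              norm_integral_le_integral_norm _
          _ ≤ ∫ s in B n, Cg * ‖f s - P s‖ ∂μ := by
              refine integral_mono
                (aux_int (C := (Cf + ∑ j, ‖c j‖) * Cg) (huc.mul hcgt).norm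
                  (fun x => by
                    rw [norm_norm, Pi.mul_apply, norm_mul]
                    exact mul_le_mul (hufb x) (hcgtB x) (norm_nonneg _) hMnn)
                  (hBfin n))
                (aux_int (C := Cg * (Cf + ∑ j, ‖c j‖)) (continuous_const.mul huc.norm)
                  (fun x => by
                    rw [Real.norm_eq_abs, Pi.mul_apply, abs_mul, abs_of_nonneg hCgnn, abs_norm]
                    exact mul_le_mul_of_nonneg_left (hufb x) hCgnn)
                  (hBfin n))
                (fun s => ?_)
              calc ‖(f s - P s) * conj (g (s - t))‖
                  = ‖f s - P s‖ * ‖conj (g (s - t))‖ := norm_mul _ _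
                _ ≤ ‖f s - P s‖ * Cg := mul_le_mul_of_nonneg_left (hcgtB s) (norm_nonneg _)
                _ = Cg * ‖f s - P s‖ := mul_comm _ _
          _ = Cg * ∫ s in B n, ‖f s - P s‖ ∂μ := integral_const_mul _ _
      have hrm : r n * (μ (B n)).toReal = 1 := by
        rw [hBA n, hrdef]; exact inv_mul_cancel₀ (hmpos n).ne'
      have hpow2 : ∀ x : ℝ, x ^ (2:ℝ) = x * x := fun x => by
        rw [show (2:ℝ) = ((2:ℕ):ℝ) by norm_num, Real.rpow_natCast]; ring
      have hI2 : (∫ s in A n, ‖f s - P s‖ ^ (2:ℝ) ∂μ) ^ (1/(2:ℝ))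
          * (∫ s in A n, ‖f s - P s‖ ^ (2:ℝ) ∂μ) ^ (1/(2:ℝ))
          = ∫ s in A n, ‖f s - P s‖ ^ (2:ℝ) ∂μ := by
        rw [← Real.rpow_add' hInn (by norm_num)]; norm_num
      have hm2 : ((μ (B n)).toReal) ^ (1/(2:ℝ)) * ((μ (B n)).toReal) ^ (1/(2:ℝ))
          = (μ (B n)).toReal := by
        rw [← Real.rpow_add' ENNReal.toReal_nonneg (by norm_num)]; norm_num
      have hSS : (∫ s in B n, ‖f s - P s‖ ∂μ) * (∫ s in B n, ‖f s - P s‖ ∂μ)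
          ≤ (∫ s in A n, ‖f s - P s‖ ^ (2:ℝ) ∂μ) * (μ (B n)).toReal := by
        calc (∫ s in B n, ‖f s - P s‖ ∂μ) * (∫ s in B n, ‖f s - P s‖ ∂μ)
            ≤ ((∫ s in A n, ‖f s - P s‖ ^ (2:ℝ) ∂μ) ^ (1/(2:ℝ))
                * ((μ (B n)).toReal) ^ (1/(2:ℝ)))
              * ((∫ s in A n, ‖f s - P s‖ ^ (2:ℝ) ∂μ) ^ (1/(2:ℝ))
                * ((μ (B n)).toReal) ^ (1/(2:ℝ))) :=
              mul_le_mul hCS' hCS' hSnn (by positivity)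
          _ = ((∫ s in A n, ‖f s - P s‖ ^ (2:ℝ) ∂μ) ^ (1/(2:ℝ))
                * (∫ s in A n, ‖f s - P s‖ ^ (2:ℝ) ∂μ) ^ (1/(2:ℝ)))
              * (((μ (B n)).toReal) ^ (1/(2:ℝ)) * ((μ (B n)).toReal) ^ (1/(2:ℝ))) := by
              ring
          _ = (∫ s in A n, ‖f s - P s‖ ^ (2:ℝ) ∂μ) * (μ (B n)).toReal := by
              rw [hI2, hm2]
      have hsq : (r n * ∫ s in B n, ‖f s - P s‖ ∂μ) ^ (2:ℝ)
          ≤ r n * ∫ s in A n, ‖f s - P s‖ ^ (2:ℝ) ∂μ := by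
        rw [hpow2]
        calc (r n * ∫ s in B n, ‖f s - P s‖ ∂μ) * (r n * ∫ s in B n, ‖f s - P s‖ ∂μ)
            = (r n * r n) * ((∫ s in B n, ‖f s - P s‖ ∂μ) * ∫ s in B n, ‖f s - P s‖ ∂μ) := by
              ring
          _ ≤ (r n * r n) * ((∫ s in A n, ‖f s - P s‖ ^ (2:ℝ) ∂μ) * (μ (B n)).toReal) :=
              mul_le_mul_of_nonneg_left hSS (mul_nonneg (hrnn n) (hrnn n))
          _ = (r n * ∫ s in A n, ‖f s - P s‖ ^ (2:ℝ) ∂μ) * (r n * (μ (B n)).toReal) := by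
              ring
          _ = r n * ∫ s in A n, ‖f s - P s‖ ^ (2:ℝ) ∂μ := by rw [hrm, mul_one]
      have hX : r n * ∫ s in B n, ‖f s - P s‖ ∂μ
          ≤ (r n * ∫ s in A n, ‖f s - P s‖ ^ (2:ℝ) ∂μ) ^ (1/(2:ℝ)) := by
        have h1 : ((r n * ∫ s in B n, ‖f s - P s‖ ∂μ) ^ (2:ℝ)) ^ (1/(2:ℝ))
            = r n * ∫ s in B n, ‖f s - P s‖ ∂μ := by
          rw [← Real.rpow_mul hXnn]; norm_num
        calc r n * ∫ s in B n, ‖f s - P s‖ ∂μ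
            = ((r n * ∫ s in B n, ‖f s - P s‖ ∂μ) ^ (2:ℝ)) ^ (1/(2:ℝ)) := h1.symm
          _ ≤ (r n * ∫ s in A n, ‖f s - P s‖ ^ (2:ℝ) ∂μ) ^ (1/(2:ℝ)) :=
              Real.rpow_le_rpow (Real.rpow_nonneg hXnn _) hsq (by norm_num)
      rw [norm_smul, Real.norm_eq_abs, abs_of_nonneg (hrnn n)]
      calc r n * ‖∫ s in B n, (f s - P s) * conj (g (s - t)) ∂μ‖
          ≤ r n * (Cg * ∫ s in B n, ‖f s - P s‖ ∂μ) :=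
            mul_le_mul_of_nonneg_left hnorm1 (hrnn n)
        _ = Cg * (r n * ∫ s in B n, ‖f s - P s‖ ∂μ) := by ring
        _ ≤ Cg * ((r n * ∫ s in A n, ‖f s - P s‖ ^ (2:ℝ) ∂μ) ^ (1/(2:ℝ))) :=
            mul_le_mul_of_nonneg_left hX hCgnn
    -- boundedness of the Besicovitch sequence
    have hbdd : IsBoundedUnder (· ≤ ·) atTop
        (fun n => ((μ (A n)).toReal⁻¹ * ∫ s in A n, ‖f s - P s‖ ^ (2:ℝ) ∂μ) ^ (1/(2:ℝ))) := by
      refine isBoundedUnder_of ⟨Cf + ∑ j, ‖c j‖, fun n => ?_⟩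
      haveI := hBfinM n
      have hInn : (0:ℝ) ≤ ∫ s in A n, ‖f s - P s‖ ^ (2:ℝ) ∂μ :=
        integral_nonneg fun s => Real.rpow_nonneg (norm_nonneg _) _
      have hIle : ∫ s in A n, ‖f s - P s‖ ^ (2:ℝ) ∂μ
          ≤ (Cf + ∑ j, ‖c j‖) ^ (2:ℝ) * (μ (A n)).toReal := by
        rw [hBres n]
        calc ∫ s in B n, ‖f s - P s‖ ^ (2:ℝ) ∂μ
            ≤ ∫ (_ : G) in B n, (Cf + ∑ j, ‖c j‖) ^ (2:ℝ) ∂μ := by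
              refine integral_mono
                (aux_int (C := (Cf + ∑ j, ‖c j‖) ^ (2:ℝ))
                  (huc.norm.rpow_const fun x => Or.inr (by norm_num))
                  (fun x => by
                    rw [Real.norm_eq_abs, abs_of_nonneg (Real.rpow_nonneg (norm_nonneg _) _)]
                    exact Real.rpow_le_rpow (norm_nonneg _) (hufb x) (by norm_num))
                  (hBfin n))
                (integrable_const _) (fun s => ?_)
              exact Real.rpow_le_rpow (norm_nonneg _) (hufb s) (by norm_num)
          _ = (Cf + ∑ j, ‖c j‖) ^ (2:ℝ) * (μ (B n)).toReal := by
              rw [setIntegral_const, smul_eq_mul, mul_comm]; rfl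
          _ = (Cf + ∑ j, ‖c j‖) ^ (2:ℝ) * (μ (A n)).toReal := by rw [hBA n]
      calc ((μ (A n)).toReal⁻¹ * ∫ s in A n, ‖f s - P s‖ ^ (2:ℝ) ∂μ) ^ (1/(2:ℝ))
          ≤ ((μ (A n)).toReal⁻¹ * ((Cf + ∑ j, ‖c j‖) ^ (2:ℝ) * (μ (A n)).toReal)) ^ (1/(2:ℝ)) :=
            Real.rpow_le_rpow (mul_nonneg (inv_nonneg.2 (hmpos n).le) hInn)
              (mul_le_mul_of_nonneg_left hIle (inv_nonneg.2 (hmpos n).le)) (by norm_num)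
        _ = ((Cf + ∑ j, ‖c j‖) ^ (2:ℝ)) ^ (1/(2:ℝ)) := by
            rw [show (μ (A n)).toReal⁻¹ * ((Cf + ∑ j, ‖c j‖) ^ (2:ℝ) * (μ (A n)).toReal)
                = (Cf + ∑ j, ‖c j‖) ^ (2:ℝ) * ((μ (A n)).toReal⁻¹ * (μ (A n)).toReal) by ring,
              inv_mul_cancel₀ (hmpos n).ne', mul_one]
        _ = Cf + ∑ j, ‖c j‖ := by rw [← Real.rpow_mul hMnn]; norm_num
    have hPnorm' : limsup
        (fun n => (((μ (A n)).toReal⁻¹ * ∫ s in A n, ‖f s - P s‖ ^ (2:ℝ) ∂μ) ^ (1/(2:ℝ))))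
        atTop < ε' := hPnorm
    have hev := eventually_lt_of_limsup_lt hPnorm' hbdd
    have hcev := (NormedAddCommGroup.tendsto_nhds_zero.mp hc0) (ε/2) (by linarith)
    have hCgε' : Cg * ε' ≤ ε / 2 := by
      rw [hε'def, mul_comm, div_mul_eq_mul_div, div_le_div_iff₀ (by positivity) (by norm_num)]
      nlinarith [hε.le, hCgnn, mul_nonneg hCgnn hε.le]
    filter_upwards [hev, hcev] with n h1 h2
    have hint1 : IntegrableOn (fun s => (f s - P s) * conj (g (s - t))) (B n) μ :=
      aux_int (C := (Cf + ∑ j, ‖c j‖) * Cg) (huc.mul hcgt)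
        (fun x => by
          rw [Pi.mul_apply, norm_mul]
          exact mul_le_mul (hufb x) (hcgtB x) (norm_nonneg _) hMnn)
        (hBfin n)
    have hint2 : IntegrableOn (fun s => P s * conj (g (s - t))) (B n) μ :=
      aux_int (C := (∑ j, ‖c j‖) * Cg) (hPc.mul hcgt)
        (fun x => by
          rw [Pi.mul_apply, norm_mul]
          exact mul_le_mul (hPB x) (hcgtB x) (norm_nonneg _) hCPnn)
        (hBfin n)
    have hdec : (fun s => f s * conj (g (s - t)))
        = fun s => (f s - P s) * conj (g (s - t)) + P s * conj (g (s - t)) :=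
      funext fun s => by ring
    have hsplit : r n • ∫ s in B n, f s * conj (g (s - t)) ∂μ
        = (r n • ∫ s in B n, (f s - P s) * conj (g (s - t)) ∂μ)
          + r n • ∫ s in B n, P s * conj (g (s - t)) ∂μ := by
      rw [← smul_add, ← integral_add hint1 hint2]
      congr 1
      exact congrArg (fun F => ∫ s in B n, F s ∂μ) hdec
    calc ‖r n • ∫ s in B n, f s * conj (g (s - t)) ∂μ‖
        ≤ ‖r n • ∫ s in B n, (f s - P s) * conj (g (s - t)) ∂μ‖
          + ‖r n • ∫ s in B n, P s * conj (g (s - t)) ∂μ‖ := by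
          rw [hsplit]; exact norm_add_le _ _
      _ < Cg * ε' + ε/2 := by
          refine add_lt_add_of_le_of_lt (le_trans (hbnd n) ?_) h2
          exact mul_le_mul_of_nonneg_left h1.le hCgnn
      _ ≤ ε/2 + ε/2 := add_le_add hCgε' le_rfl
      _ = ε := by ring
  constructor
  · intro t
    have h := main1 t
    have heq : ∀ n, r n • ∫ s in B n, f s * conj (g (s - t)) ∂μ
        = (μ (A n)).toReal⁻¹ • ∫ s in A n, f s * tilde g (t - s) ∂μ := by
      intro n
      rw [hBres n]
      simp [hrdef, tilde, neg_sub]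
    simpa using h.congr heq
  · intro t
    set H : G → ℂ := fun u => f u * conj (g (u + t)) with hHdef
    have hHc : Continuous H :=
      hfc.mul (continuous_star.comp (hgc.comp (continuous_id.add continuous_const)))
    have hHC : ∀ x, ‖H x‖ ≤ Cf * Cg := by
      intro x
      rw [hHdef]
      calc ‖f x * conj (g (x + t))‖ = ‖f x‖ * ‖g (x + t)‖ := by
            rw [norm_mul, RCLike.norm_conj]
        _ ≤ Cf * Cg := mul_le_mul (hCf x) (hCg _) (norm_nonneg _) hCfnn
    have h2 : Tendsto (fun n => r n • ∫ s in B n, H s ∂μ) atTop (𝓝 0) := by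
      have := main1 (-t)
      refine this.congr fun n => ?_
      congr 1
      refine setIntegral_congr_fun (hBm n) fun s _ => ?_
      rw [hHdef]
      simp [sub_neg_eq_add]
    have h1 := htrans H (Cf * Cg) hHc hHC t
    have hconj : Tendsto (fun n =>
        conj (r n • ∫ s in B n, g s * conj (f (s - t)) ∂μ)) atTop (𝓝 0) := by
      have hsum := h1.add h2
      rw [add_zero] at hsum
      refine hsum.congr fun n => ?_
      rw [smul_sub, sub_add_cancel, ← hsubst H t n]
      rw [aux_conj_smul, ← integral_conj]
      congr 1
      refine setIntegral_congr_fun (hBm n) fun s _ => ?_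
      rw [hHdef]
      simp only [map_mul, RingHomCompTriple.comp_apply, RCLike.conj_conj,
        RingHom.id_apply]
      rw [sub_add_cancel]
      ring
    have hq : Tendsto (fun n => r n • ∫ s in B n, g s * conj (f (s - t)) ∂μ)
        atTop (𝓝 0) := by
      have hdc := aux_tendsto_conj hconj
      refine hdc.congr fun n => ?_
      simp
    have heq : ∀ n, r n • ∫ s in B n, g s * conj (f (s - t)) ∂μ
        = (μ (A n)).toReal⁻¹ • ∫ s in A n, g s * tilde f (t - s) ∂μ := by
      intro n
      rw [hBres n]
      simp [hrdef, tilde, neg_sub]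
    simpa using hq.congr heq
end
end

section
/- Let f ∈ Cu(G) be Besicovitch almost periodic with respect to a van Hove sequence A. Then for every character χ of G the Fourier–Bohr coefficient c_χ^A(f) exists. -/
open MeasureTheory Filter Topology Pointwise ComplexConjugate
open scoped BigOperators

noncomputable section

variable {G : Type*} [AddCommGroup G] [UniformSpace G] [IsUniformAddGroup G]
  [LocallyCompactSpace G] [SecondCountableTopology G]
  [MeasurableSpace G] [BorelSpace G]

/-! ### Auxiliary lemmas -/

lemma isChar_conj {χ : G → ℂ} (hχ : IsChar χ) : IsChar fun x => conj (χ x) := by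
  refine ⟨?_, fun x => ?_, fun x y => ?_⟩
  · exact Complex.continuous_conj.comp hχ.1
  · show ‖conj (χ x)‖ = 1
    rw [RCLike.norm_conj]; exact hχ.2.1 x
  · show conj (χ (x + y)) = conj (χ x) * conj (χ y)
    rw [hχ.2.2 x y, map_mul]

lemma isChar_mul {χ ψ : G → ℂ} (h1 : IsChar χ) (h2 : IsChar ψ) :
    IsChar fun x => χ x * ψ x :=
  ⟨h1.1.mul h2.1,
   fun x => by show ‖χ x * ψ x‖ = 1; rw [norm_mul, h1.2.1, h2.2.1, one_mul],
   fun x y => by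
    show χ (x + y) * ψ (x + y) = χ x * ψ x * (χ y * ψ y)
    rw [h1.2.2, h2.2.2]; ring⟩

/-- On a compact set, the restriction of a measure agrees with the restriction to the
closure (in a topological group, where compact sets have closures of the same measure). -/
lemma restrict_closure_eq (μ : Measure G) {s : Set G} (hs : IsCompact s)
    (hfin : μ s ≠ ⊤) : μ.restrict (closure s) = μ.restrict s := by
  have hcl : μ (closure s) = μ s := hs.measure_closure μ
  have hle : μ.restrict s ≤ μ.restrict (closure s) :=
    Measure.restrict_mono subset_closure le_rfl
  ext S hS
  refine le_antisymm ?_ (Measure.le_iff'.1 hle S)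
  have h1 : μ.restrict (closure s) S + μ.restrict (closure s) Sᶜ = μ s := by
    rw [measure_add_measure_compl hS, Measure.restrict_apply_univ, hcl]
  have h2 : μ.restrict s S + μ.restrict s Sᶜ = μ s := by
    rw [measure_add_measure_compl hS, Measure.restrict_apply_univ]
  have h3 : μ.restrict s Sᶜ ≤ μ.restrict (closure s) Sᶜ := Measure.le_iff'.1 hle _
  have h4 : μ.restrict s Sᶜ ≠ ⊤ := by
    refine ne_top_of_le_ne_top hfin ?_
    rw [← Measure.restrict_apply_univ s]
    exact measure_mono (Set.subset_univ _)
  refine ENNReal.le_of_add_le_add_right h4 ?_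
  calc μ.restrict (closure s) S + μ.restrict s Sᶜ
      ≤ μ.restrict (closure s) S + μ.restrict (closure s) Sᶜ := add_le_add le_rfl h3
    _ = μ s := h1
    _ = μ.restrict s S + μ.restrict s Sᶜ := h2.symm

lemma integrableOn_of_bdd (μ : Measure G) {s : Set G} (hfin : μ s ≠ ⊤) {g : G → ℂ}
    (hg : Continuous g) {C : ℝ} (hC : ∀ x, ‖g x‖ ≤ C) : IntegrableOn g s μ :=
  Measure.integrableOn_of_bounded hfin hg.aestronglyMeasurable (ae_of_all _ hC)

/-- Key estimate: the mean of a character over a (closure of a) compact set is controlled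
by the van Hove boundary. -/
lemma key_est (μ : Measure G) [μ.IsAddHaarMeasure] {s : Set G} (hs : IsCompact s)
    {η : G → ℂ} (hη : IsChar η) (t : G) :
    ‖η t - 1‖ * ‖∫ x in closure s, η x ∂μ‖
      ≤ 2 * (μ (vhBoundary ({t, -t} : Set G) s)).toReal := by
  set K : Set G := {t, -t} with hKdef
  have hKc : IsCompact K := (Set.toFinite K).isCompact
  have hDfin : μ (vhBoundary K s) ≠ ⊤ := by
    have hsub : vhBoundary K s ⊆ closure (s + K) ∪ closure s := by
      rintro x (hx | hx)
      · exact Or.inl hx.1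
      · exact Or.inr hx.2
    have hc1 : IsCompact (closure (s + K)) := (hs.add hKc).closure
    have hc2 : IsCompact (closure s) := hs.closure
    have hle : μ (vhBoundary K s) ≤ μ (closure (s + K)) + μ (closure s) :=
      (measure_mono hsub).trans (measure_union_le _ _)
    exact (hle.trans_lt (ENNReal.add_lt_top.2 ⟨hc1.measure_lt_top, hc2.measure_lt_top⟩)).ne
  have hηc : Continuous η := hη.1
  have hint : ∀ u : Set G, μ u ≠ ⊤ → IntegrableOn η u μ :=
    fun u hu => integrableOn_of_bdd μ hu hηc (fun x => (hη.2.1 x).le)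
  set B : Set G := closure s with hBdef
  have hBm : MeasurableSet B := isClosed_closure.measurableSet
  have hBc : IsCompact B := hs.closure
  have hBfin : μ B ≠ ⊤ := hBc.measure_lt_top.ne
  have hSim : (t +ᵥ B) = (fun x => t + x) '' B := by
    rw [← Set.image_vadd]; rfl
  have hScomp : IsCompact (t +ᵥ B) := by
    rw [hSim]; exact hBc.image (continuous_const.add continuous_id)
  have hSm : MeasurableSet (t +ᵥ B) := hBm.const_vadd t
  have hSfin : μ (t +ᵥ B) ≠ ⊤ := hScomp.measure_lt_top.ne
  -- translation identity
  have htrans : ∫ x in (t +ᵥ B), η x ∂μ = η t * ∫ x in B, η x ∂μ := by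
    rw [hSim,
      (measurePreserving_add_left μ t).setIntegral_image_emb
        (MeasurableEquiv.addLeft t).measurableEmbedding]
    simp only [hη.2.2]
    exact integral_const_mul _ _
  -- splitting
  have hIS : IntegrableOn η (t +ᵥ B) μ := hint _ hSfin
  have hIT : IntegrableOn η B μ := hint _ hBfin
  have hsplitS : ∫ x in (t +ᵥ B), η x ∂μ
      = ∫ x in (t +ᵥ B) \ B, η x ∂μ + ∫ x in (t +ᵥ B) ∩ B, η x ∂μ := by
    conv_lhs => rw [← Set.diff_union_inter (t +ᵥ B) B]
    exact setIntegral_union Set.disjoint_sdiff_inter (hSm.inter hBm)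
      (hIS.mono_set Set.diff_subset) (hIS.mono_set Set.inter_subset_left)
  have hsplitT : ∫ x in B, η x ∂μ
      = ∫ x in B \ (t +ᵥ B), η x ∂μ + ∫ x in (t +ᵥ B) ∩ B, η x ∂μ := by
    conv_lhs => rw [← Set.diff_union_inter B (t +ᵥ B)]
    rw [setIntegral_union Set.disjoint_sdiff_inter (hBm.inter hSm)
      (hIT.mono_set Set.diff_subset) (hIT.mono_set Set.inter_subset_left),
      Set.inter_comm]
  -- inclusions into the van Hove boundary
  have himg : ∀ y ∈ B, t + y ∈ closure (s + K) := by
    intro y hy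
    have h1 : (fun z : G => t + z) '' B ⊆ closure ((fun z : G => t + z) '' s) := by
      rw [hBdef]
      exact image_closure_subset_closure_image (continuous_const.add continuous_id)
    have h2 : closure ((fun z : G => t + z) '' s) ⊆ closure (s + K) := by
      apply closure_mono
      rintro z ⟨a, ha, rfl⟩
      show t + a ∈ s + K
      rw [add_comm t a]
      exact Set.add_mem_add ha (Set.mem_insert _ _)
    exact h2 (h1 ⟨y, hy, rfl⟩)
  have hsub1 : (t +ᵥ B) \ B ⊆ vhBoundary K s := by
    rintro x ⟨hxS, hxB⟩
    rw [Set.mem_vadd_set_iff_neg_vadd_mem] at hxS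
    have hx1 : x ∈ closure (s + K) := by
      have := himg (-t + x) (by simpa [vadd_eq_add] using hxS)
      simpa [add_neg_cancel_left] using this
    have hx2 : x ∉ s := fun hx => hxB (subset_closure hx)
    exact Or.inl ⟨hx1, hx2⟩
  have hsub2 : B \ (t +ᵥ B) ⊆ vhBoundary K s := by
    rintro x ⟨hxB, hxS⟩
    rw [Set.mem_vadd_set_iff_neg_vadd_mem] at hxS
    refine Or.inr ⟨?_, hxB⟩
    refine ⟨-t + x, ?_, -t, Set.mem_insert_of_mem _ rfl, ?_⟩
    · intro hmem
      exact hxS (by simpa [vadd_eq_add] using subset_closure hmem)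
    · show -t + x - -t = x
      rw [sub_neg_eq_add, add_comm (-t) x, add_assoc, neg_add_cancel, add_zero]
  -- norm bounds
  have hb1 : ‖∫ x in (t +ᵥ B) \ B, η x ∂μ‖ ≤ (μ (vhBoundary K s)).toReal := by
    have hlt : μ ((t +ᵥ B) \ B) < ⊤ :=
      (measure_mono Set.diff_subset).trans_lt hScomp.measure_lt_top
    have h := norm_setIntegral_le_of_norm_le_const (C := 1) hlt
      (fun x _ => (hη.2.1 x).le)
    calc ‖∫ x in (t +ᵥ B) \ B, η x ∂μ‖ ≤ 1 * (μ ((t +ᵥ B) \ B)).toReal := h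
      _ = (μ ((t +ᵥ B) \ B)).toReal := one_mul _
      _ ≤ (μ (vhBoundary K s)).toReal := ENNReal.toReal_mono hDfin (measure_mono hsub1)
  have hb2 : ‖∫ x in B \ (t +ᵥ B), η x ∂μ‖ ≤ (μ (vhBoundary K s)).toReal := by
    have hlt : μ (B \ (t +ᵥ B)) < ⊤ :=
      (measure_mono Set.diff_subset).trans_lt hBc.measure_lt_top
    have h := norm_setIntegral_le_of_norm_le_const (C := 1) hlt
      (fun x _ => (hη.2.1 x).le)
    calc ‖∫ x in B \ (t +ᵥ B), η x ∂μ‖ ≤ 1 * (μ (B \ (t +ᵥ B))).toReal := h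
      _ = (μ (B \ (t +ᵥ B))).toReal := one_mul _
      _ ≤ (μ (vhBoundary K s)).toReal := ENNReal.toReal_mono hDfin (measure_mono hsub2)
  have heq : (η t - 1) * ∫ x in B, η x ∂μ
      = ∫ x in (t +ᵥ B) \ B, η x ∂μ - ∫ x in B \ (t +ᵥ B), η x ∂μ := by
    rw [sub_mul, one_mul, ← htrans, hsplitS, hsplitT]
    ring
  calc ‖η t - 1‖ * ‖∫ x in B, η x ∂μ‖
      = ‖(η t - 1) * ∫ x in B, η x ∂μ‖ := (norm_mul _ _).symm
    _ = ‖∫ x in (t +ᵥ B) \ B, η x ∂μ - ∫ x in B \ (t +ᵥ B), η x ∂μ‖ := by rw [heq]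
    _ ≤ ‖∫ x in (t +ᵥ B) \ B, η x ∂μ‖ + ‖∫ x in B \ (t +ᵥ B), η x ∂μ‖ := norm_sub_le _ _
    _ ≤ (μ (vhBoundary K s)).toReal + (μ (vhBoundary K s)).toReal := add_le_add hb1 hb2
    _ = 2 * (μ (vhBoundary K s)).toReal := by ring

/-- The mean of a character along a van Hove sequence exists. -/
lemma charMean (μ : Measure G) [μ.IsAddHaarMeasure] (A : ℕ → Set G) (hA : IsVanHove μ A)
    (η : G → ℂ) (hη : IsChar η) :
    ∃ c : ℂ, Tendsto (fun n => (μ (A n)).toReal⁻¹ • ∫ x in A n, η x ∂μ) atTop (𝓝 c) := by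
  obtain ⟨hAc, hApos, hAvh⟩ := hA
  have hAfin : ∀ n, μ (A n) ≠ ⊤ := fun n => (hAc n).measure_lt_top.ne
  have hAtR : ∀ n, (μ (A n)).toReal ≠ 0 :=
    fun n => (ENNReal.toReal_pos (hApos n).ne' (hAfin n)).ne'
  by_cases h1 : ∀ u : G, η u = 1
  · refine ⟨1, Tendsto.congr (fun n => ?_) tendsto_const_nhds⟩
    simp only [h1]
    rw [setIntegral_const, smul_smul, measureReal_def, inv_mul_cancel₀ (hAtR n), one_smul]
  · push_neg at h1
    obtain ⟨t, ht⟩ := h1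
    have hd : (0:ℝ) < ‖η t - 1‖ := by
      rw [norm_pos_iff]; exact sub_ne_zero.2 ht
    refine ⟨0, ?_⟩
    have hres : ∀ n, μ.restrict (A n) = μ.restrict (closure (A n)) :=
      fun n => (restrict_closure_eq μ (hAc n) (hAfin n)).symm
    have hDfin : ∀ n, μ (vhBoundary ({t, -t} : Set G) (A n)) ≠ ⊤ := by
      intro n
      have hsub : vhBoundary ({t, -t} : Set G) (A n)
          ⊆ closure (A n + ({t, -t} : Set G)) ∪ closure (A n) := by
        rintro x (hx | hx)
        · exact Or.inl hx.1
        · exact Or.inr hx.2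
      have hc1 : IsCompact (closure (A n + ({t, -t} : Set G))) :=
        ((hAc n).add ((Set.toFinite _).isCompact)).closure
      have hc2 : IsCompact (closure (A n)) := (hAc n).closure
      have hle : μ (vhBoundary ({t, -t} : Set G) (A n))
          ≤ μ (closure (A n + ({t, -t} : Set G))) + μ (closure (A n)) :=
        (measure_mono hsub).trans (measure_union_le _ _)
      exact (hle.trans_lt (ENNReal.add_lt_top.2
        ⟨hc1.measure_lt_top, hc2.measure_lt_top⟩)).ne
    have hratio : Tendsto
        (fun n => (μ (vhBoundary ({t, -t} : Set G) (A n))).toReal / (μ (A n)).toReal)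
        atTop (𝓝 0) := by
      have h0 := hAvh ({t, -t} : Set G) ((Set.toFinite _).isCompact)
      have h2 := (ENNReal.tendsto_toReal (by simp : (0:ENNReal) ≠ ⊤)).comp h0
      simpa [Function.comp_def, ENNReal.toReal_div] using h2
    rw [tendsto_zero_iff_norm_tendsto_zero]
    have hg : Tendsto (fun n => (2 / ‖η t - 1‖) *
        ((μ (vhBoundary ({t, -t} : Set G) (A n))).toReal / (μ (A n)).toReal)) atTop (𝓝 0) := by
      simpa using hratio.const_mul (2 / ‖η t - 1‖)
    refine squeeze_zero (fun n => norm_nonneg _) (fun n => ?_) hg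
    rw [hres n, norm_smul, Real.norm_eq_abs,
      abs_of_nonneg (inv_nonneg.2 ENNReal.toReal_nonneg)]
    have hI : ‖∫ x in closure (A n), η x ∂μ‖
        ≤ 2 * (μ (vhBoundary ({t, -t} : Set G) (A n))).toReal / ‖η t - 1‖ := by
      rw [le_div_iff₀ hd]
      calc ‖∫ x in closure (A n), η x ∂μ‖ * ‖η t - 1‖
          = ‖η t - 1‖ * ‖∫ x in closure (A n), η x ∂μ‖ := mul_comm _ _
        _ ≤ _ := key_est μ (hAc n) hη t
    calc (μ (A n)).toReal⁻¹ * ‖∫ x in closure (A n), η x ∂μ‖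
        ≤ (μ (A n)).toReal⁻¹ *
            (2 * (μ (vhBoundary ({t, -t} : Set G) (A n))).toReal / ‖η t - 1‖) :=
          mul_le_mul_of_nonneg_left hI (inv_nonneg.2 ENNReal.toReal_nonneg)
      _ = 2 / ‖η t - 1‖ *
            ((μ (vhBoundary ({t, -t} : Set G) (A n))).toReal / (μ (A n)).toReal) := by
          field_simp

/-- The Fourier–Bohr coefficient of a trigonometric polynomial exists. -/
lemma trigMean (μ : Measure G) [μ.IsAddHaarMeasure] (A : ℕ → Set G) (hA : IsVanHove μ A)
    {χ : G → ℂ} (hχ : IsChar χ) {P : G → ℂ} (hP : IsTrigPoly P) :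
    ∃ c : ℂ, Tendsto (fun n => (μ (A n)).toReal⁻¹ • ∫ x in A n, conj (χ x) * P x ∂μ)
      atTop (𝓝 c) := by
  obtain ⟨k, c, ψ, hψ, rfl⟩ := hP
  have hηs : ∀ j, IsChar fun x => conj (χ x) * ψ j x :=
    fun j => isChar_mul (isChar_conj hχ) (hψ j)
  choose cc hcc using fun j => charMean μ A hA _ (hηs j)
  refine ⟨∑ j, c j * cc j, ?_⟩
  have hAfin : ∀ n, μ (A n) ≠ ⊤ := fun n => (hA.1 n).measure_lt_top.ne
  have hrw : ∀ n, (μ (A n)).toReal⁻¹ • ∫ x in A n, conj (χ x) * (∑ j, c j * ψ j x) ∂μ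
      = ∑ j, c j * ((μ (A n)).toReal⁻¹ • ∫ x in A n, conj (χ x) * ψ j x ∂μ) := by
    intro n
    have hinteg : ∀ j : Fin k,
        IntegrableOn (fun x => c j * (conj (χ x) * ψ j x)) (A n) μ := by
      intro j
      refine integrableOn_of_bdd μ (hAfin n) (continuous_const.mul (hηs j).1)
        (C := ‖c j‖) (fun x => ?_)
      rw [norm_mul, (hηs j).2.1, mul_one]
    have h1 : ∀ x : G, conj (χ x) * (∑ j, c j * ψ j x)
        = ∑ j, c j * (conj (χ x) * ψ j x) := by
      intro x
      rw [Finset.mul_sum]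
      exact Finset.sum_congr rfl fun j _ => by ring
    simp only [h1]
    rw [integral_finset_sum _ (fun j _ => hinteg j), Finset.smul_sum]
    refine Finset.sum_congr rfl fun j _ => ?_
    rw [integral_const_mul, Complex.real_smul, Complex.real_smul]
    ring
  exact Tendsto.congr (fun n => (hrw n).symm)
    (tendsto_finset_sum _ fun j _ => Tendsto.const_mul (c j) (hcc j))

lemma IsTrigPoly.continuous' {P : G → ℂ} (hP : IsTrigPoly P) : Continuous P := by
  obtain ⟨k, c, ψ, hψ, rfl⟩ := hP
  exact continuous_finset_sum _ fun j _ => continuous_const.mul (hψ j).1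

lemma IsTrigPoly.bound {P : G → ℂ} (hP : IsTrigPoly P) : ∃ C, ∀ x, ‖P x‖ ≤ C := by
  obtain ⟨k, c, ψ, hψ, rfl⟩ := hP
  refine ⟨∑ j, ‖c j‖, fun x => ?_⟩
  calc ‖∑ j, c j * ψ j x‖ ≤ ∑ j, ‖c j * ψ j x‖ := norm_sum_le _ _
    _ = ∑ j, ‖c j‖ := Finset.sum_congr rfl fun j _ => by rw [norm_mul, (hψ j).2.1, mul_one]

/-- a Besicovitch almost periodic `f ∈ Cu(G)` has all Fourier–Bohr
coefficients (w.r.t. `A`). -/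
theorem stmt16 (μ : Measure G) [μ.IsAddHaarMeasure] (A : ℕ → Set G)
    (hA : IsVanHove μ A) (f : G → ℂ) (hf : IsCu f)
    (hBap : BapP μ A 1 f) :
    ∀ χ : G → ℂ, IsChar χ → ∃ c : ℂ, FBTendsto μ A χ f c := by
  intro χ hχ
  have hAc := hA.1
  have hApos := hA.2.1
  have hAfin : ∀ n, μ (A n) ≠ ⊤ := fun n => (hAc n).measure_lt_top.ne
  have hAtR : ∀ n, (μ (A n)).toReal ≠ 0 :=
    fun n => (ENNReal.toReal_pos (hApos n).ne' (hAfin n)).ne'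
  have hfc : Continuous f := hf.1.continuous
  obtain ⟨Cf, hCf⟩ := hf.2
  suffices h : CauchySeq fun n => (μ (A n)).toReal⁻¹ • ∫ t in A n, conj (χ t) * f t ∂μ by
    obtain ⟨c, hc⟩ := cauchySeq_tendsto_of_complete h
    exact ⟨c, hc⟩
  rw [Metric.cauchySeq_iff]
  intro ε hε
  obtain ⟨P, hPt, hPb⟩ := hBap (ε/4) (by linarith)
  obtain ⟨CP, hCP⟩ := hPt.bound
  have hPc : Continuous P := hPt.continuous'
  obtain ⟨c0, hc0⟩ := trigMean μ A hA hχ hPt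
  -- distance between averages of `f` and of `P`
  have hdiffbd : ∀ n, ‖((μ (A n)).toReal⁻¹ • ∫ t in A n, conj (χ t) * f t ∂μ)
      - ((μ (A n)).toReal⁻¹ • ∫ t in A n, conj (χ t) * P t ∂μ)‖
      ≤ (μ (A n)).toReal⁻¹ * ∫ t in A n, ‖f t - P t‖ ∂μ := by
    intro n
    have hIf : IntegrableOn (fun t => conj (χ t) * f t) (A n) μ :=
      integrableOn_of_bdd μ (hAfin n) ((isChar_conj hχ).1.mul hfc) (C := Cf)
        (fun x => by rw [norm_mul, RCLike.norm_conj, hχ.2.1, one_mul]; exact hCf x)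
    have hIP : IntegrableOn (fun t => conj (χ t) * P t) (A n) μ :=
      integrableOn_of_bdd μ (hAfin n) ((isChar_conj hχ).1.mul hPc) (C := CP)
        (fun x => by rw [norm_mul, RCLike.norm_conj, hχ.2.1, one_mul]; exact hCP x)
    rw [← smul_sub, ← integral_sub hIf hIP, norm_smul, Real.norm_eq_abs,
      abs_of_nonneg (inv_nonneg.2 ENNReal.toReal_nonneg)]
    refine mul_le_mul_of_nonneg_left ?_ (inv_nonneg.2 ENNReal.toReal_nonneg)
    calc ‖∫ t in A n, conj (χ t) * f t - conj (χ t) * P t ∂μ‖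
        ≤ ∫ t in A n, ‖conj (χ t) * f t - conj (χ t) * P t‖ ∂μ :=
          norm_integral_le_integral_norm _
      _ = ∫ t in A n, ‖f t - P t‖ ∂μ := by
          refine integral_congr_ae (ae_of_all _ fun x => ?_)
          show ‖conj (χ x) * f x - conj (χ x) * P x‖ = ‖f x - P x‖
          rw [← mul_sub, norm_mul, RCLike.norm_conj, hχ.2.1, one_mul]
  -- the Besicovitch bound gives eventual smallness
  have hbeq : bNorm μ A 1 (fun x => f x - P x)
      = Filter.limsup (fun n => (μ (A n)).toReal⁻¹ * ∫ t in A n, ‖f t - P t‖ ∂μ) atTop := by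
    unfold bNorm
    congr 1
    funext n
    norm_num [Real.rpow_one]
  rw [hbeq] at hPb
  have hbddabove : IsBoundedUnder (· ≤ ·) atTop
      (fun n => (μ (A n)).toReal⁻¹ * ∫ t in A n, ‖f t - P t‖ ∂μ) := by
    refine isBoundedUnder_of ⟨Cf + CP, fun n => ?_⟩
    have h1 : ∫ t in A n, ‖f t - P t‖ ∂μ ≤ (Cf + CP) * (μ (A n)).toReal := by
      have h2 := norm_setIntegral_le_of_norm_le_const (μ := μ) (s := A n) (C := Cf + CP)
        (f := fun t => ‖f t - P t‖) (hAc n).measure_lt_top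
        (fun x _ => by
          rw [norm_norm]
          exact (norm_sub_le _ _).trans (add_le_add (hCf x) (hCP x)))
      calc ∫ t in A n, ‖f t - P t‖ ∂μ ≤ ‖∫ t in A n, ‖f t - P t‖ ∂μ‖ := le_abs_self _
        _ ≤ (Cf + CP) * (μ (A n)).toReal := h2
    calc (μ (A n)).toReal⁻¹ * ∫ t in A n, ‖f t - P t‖ ∂μ
        ≤ (μ (A n)).toReal⁻¹ * ((Cf + CP) * (μ (A n)).toReal) :=
          mul_le_mul_of_nonneg_left h1 (inv_nonneg.2 ENNReal.toReal_nonneg)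
      _ = Cf + CP := by
          rw [mul_comm (Cf + CP), ← mul_assoc, inv_mul_cancel₀ (hAtR n), one_mul]
  have hev : ∀ᶠ n in atTop,
      (μ (A n)).toReal⁻¹ * ∫ t in A n, ‖f t - P t‖ ∂μ < ε/4 :=
    eventually_lt_of_limsup_lt hPb hbddabove
  obtain ⟨N1, hN1⟩ := eventually_atTop.1 hev
  obtain ⟨N2, hN2⟩ := Metric.cauchySeq_iff.1 hc0.cauchySeq (ε/4) (by linarith)
  refine ⟨max N1 N2, fun m hm n hn => ?_⟩
  have hclose : ∀ p, max N1 N2 ≤ p →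
      dist ((μ (A p)).toReal⁻¹ • ∫ t in A p, conj (χ t) * f t ∂μ)
        ((μ (A p)).toReal⁻¹ • ∫ t in A p, conj (χ t) * P t ∂μ) < ε/4 := by
    intro p hp
    rw [dist_eq_norm]
    exact lt_of_le_of_lt (hdiffbd p) (hN1 p (le_trans (le_max_left _ _) hp))
  calc dist ((μ (A m)).toReal⁻¹ • ∫ t in A m, conj (χ t) * f t ∂μ)
        ((μ (A n)).toReal⁻¹ • ∫ t in A n, conj (χ t) * f t ∂μ)
      ≤ dist ((μ (A m)).toReal⁻¹ • ∫ t in A m, conj (χ t) * f t ∂μ)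
          ((μ (A m)).toReal⁻¹ • ∫ t in A m, conj (χ t) * P t ∂μ)
        + dist ((μ (A m)).toReal⁻¹ • ∫ t in A m, conj (χ t) * P t ∂μ)
            ((μ (A n)).toReal⁻¹ • ∫ t in A n, conj (χ t) * P t ∂μ)
        + dist ((μ (A n)).toReal⁻¹ • ∫ t in A n, conj (χ t) * P t ∂μ)
            ((μ (A n)).toReal⁻¹ • ∫ t in A n, conj (χ t) * f t ∂μ) :=
        dist_triangle4 _ _ _ _
    _ < ε/4 + ε/4 + ε/4 := by
        refine add_lt_add (add_lt_add (hclose m hm) ?_) ?_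
        · exact hN2 m (le_trans (le_max_right _ _) hm) n (le_trans (le_max_right _ _) hn)
        · rw [dist_comm]; exact hclose n hn
    _ < ε := by linarith
end
end

section
/- Let f ∈ Cu(G) and let A be a van Hove sequence. If f is amenable with respect to A, then f is amenable with respect to every van Hove sequence B, and the mean is independent of the sequence: M_A(f) = M_B(f). -/
open MeasureTheory Filter Topology Pointwise ComplexConjugate
open scoped BigOperators

noncomputable section

variable {G : Type*} [AddCommGroup G] [UniformSpace G] [IsUniformAddGroup G]
  [LocallyCompactSpace G] [SecondCountableTopology G]
  [MeasurableSpace G] [BorelSpace G]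

section helpers

set_option linter.unusedSectionVars false

/-- For a compact set in an R₁ space, restricting a Borel measure to the set or to its
closure gives the same measure. -/
lemma my_restrict_closure (μ : Measure G) {s : Set G} (hs : IsCompact s) :
    μ.restrict (closure s) = μ.restrict s := by
  ext t ht
  rw [Measure.restrict_apply ht, Measure.restrict_apply ht]
  refine le_antisymm ?_ (measure_mono (Set.inter_subset_inter_right _ subset_closure))
  have h1 : t ∩ closure s ⊆ toMeasurable μ (t ∩ s) := by
    rintro x ⟨hxt, hxc⟩
    rw [hs.closure_eq_biUnion_inseparable] at hxc
    simp only [Set.mem_iUnion] at hxc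
    obtain ⟨y, hy, hxy⟩ := hxc
    have hxy' : Inseparable x y := (Set.mem_setOf_eq ▸ hxy).symm
    have hyt : y ∈ t := (hxy'.mem_measurableSet_iff ht).1 hxt
    have : y ∈ toMeasurable μ (t ∩ s) := subset_toMeasurable _ _ ⟨hyt, hy⟩
    exact (hxy'.mem_measurableSet_iff (measurableSet_toMeasurable _ _)).2 this
  exact (measure_mono h1).trans_eq (measure_toMeasurable _)

lemma my_setIntegral_vadd (μ : Measure G) [μ.IsAddHaarMeasure] {f : G → ℂ} (hfc : Continuous f)
    {s : Set G} (hs : MeasurableSet s) (x : G) :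
    ∫ t in x +ᵥ s, f t ∂μ = ∫ t in s, f (x + t) ∂μ := by
  have h1 : ((x + ·) ⁻¹' (x +ᵥ s)) = s := by
    ext t; simp [Set.mem_vadd_set_iff_neg_vadd_mem]
  have hvadd : MeasurableSet (x +ᵥ s) := hs.const_vadd x
  have h2 : μ.restrict (x +ᵥ s) = Measure.map (x + ·) (μ.restrict s) := by
    conv_lhs => rw [← Measure.IsAddLeftInvariant.map_add_left_eq_self (μ := μ) x]
    rw [Measure.restrict_map (measurable_const_add x) hvadd, h1]
  rw [h2, integral_map (measurable_const_add x).aemeasurable hfc.aestronglyMeasurable]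

/-- Version for a compact (possibly non-measurable) set, expressed via the closure. -/
lemma my_setIntegral_vadd' (μ : Measure G) [μ.IsAddHaarMeasure] {f : G → ℂ}
    (hfc : Continuous f) {s : Set G} (hs : IsCompact s) (x : G) :
    ∫ t in x +ᵥ s, f t ∂μ = ∫ t in closure s, f (x + t) ∂μ := by
  have e1 : closure (x +ᵥ s) = x +ᵥ closure s := closure_vadd x s
  have h1 : μ.restrict (x +ᵥ s) = μ.restrict (x +ᵥ closure s) := by
    rw [← e1, my_restrict_closure μ (hs.vadd x)]
  calc ∫ t in x +ᵥ s, f t ∂μ = ∫ t in x +ᵥ closure s, f t ∂μ := by rw [h1]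
    _ = ∫ t in closure s, f (x + t) ∂μ :=
        my_setIntegral_vadd μ hfc isClosed_closure.measurableSet x

lemma my_integrableOn_of_bdd (μ : Measure G) {f : G → ℂ} (hm : AEStronglyMeasurable f μ)
    {C : ℝ} (hb : ∀ x, ‖f x‖ ≤ C) {s : Set G} (hs : μ s ≠ ⊤) : IntegrableOn f s μ := by
  haveI : IsFiniteMeasure (μ.restrict s) :=
    ⟨by rwa [Measure.restrict_apply_univ, lt_top_iff_ne_top]⟩
  exact ⟨hm.restrict, HasFiniteIntegral.of_bounded (ae_of_all _ hb)⟩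

lemma my_setIntegral_sub_decomp (μ : Measure G) {g : G → ℂ} {S T : Set G}
    (hSm : MeasurableSet S) (hTm : MeasurableSet T)
    (hgS : IntegrableOn g S μ) (hgT : IntegrableOn g T μ) :
    (∫ t in S, g t ∂μ) - ∫ t in T, g t ∂μ =
      (∫ t in S \ T, g t ∂μ) - ∫ t in T \ S, g t ∂μ := by
  have hS : (∫ t in S, g t ∂μ) = (∫ t in S ∩ T, g t ∂μ) + ∫ t in S \ T, g t ∂μ := by
    have h := setIntegral_union (f := g) (μ := μ)
      (Set.disjoint_sdiff_right.mono_left Set.inter_subset_right)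
      (hSm.diff hTm) (hgS.mono_set Set.inter_subset_left) (hgS.mono_set Set.diff_subset)
    rwa [Set.inter_union_diff] at h
  have hT : (∫ t in T, g t ∂μ) = (∫ t in T ∩ S, g t ∂μ) + ∫ t in T \ S, g t ∂μ := by
    have h := setIntegral_union (f := g) (μ := μ)
      (Set.disjoint_sdiff_right.mono_left Set.inter_subset_right)
      (hTm.diff hSm) (hgT.mono_set Set.inter_subset_left) (hgT.mono_set Set.diff_subset)
    rwa [Set.inter_union_diff] at h
  rw [hS, hT, Set.inter_comm T S]; ring

end helpers

/-- an amenable function is amenable w.r.t. every van Hove sequence, with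
the same mean. -/
theorem stmt18 (μ : Measure G) [μ.IsAddHaarMeasure] (A : ℕ → Set G)
    (hA : IsVanHove μ A) (f : G → ℂ) (hf : IsCu f) (c : ℂ)
    (h : Amenable μ A f c) :
    ∀ B : ℕ → Set G, IsVanHove μ B → Amenable μ B f c := by
  obtain ⟨hAc, hApos, _⟩ := hA
  intro B hB
  obtain ⟨hBc, hBpos, hBvh⟩ := hB
  obtain ⟨hfu, C0, hC0⟩ := hf
  have hfc : Continuous f := hfu.continuous
  set C : ℝ := max C0 0 with hCdef
  have hfb : ∀ x, ‖f x‖ ≤ C := fun x => (hC0 x).trans (le_max_left _ _)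
  have hC : 0 ≤ C := le_max_right _ _
  rw [Amenable, Metric.tendstoUniformly_iff] at h ⊢
  intro ε hε
  obtain ⟨N, hN⟩ := (h (ε / 2) (by positivity)).exists
  -- closures of the reference set
  set SA : Set G := closure (A N) with hSAdef
  have hSAc : IsCompact SA := (hAc N).closure
  have hSAm : MeasurableSet SA := isClosed_closure.measurableSet
  have hμSA : μ SA = μ (A N) := (hAc N).measure_closure μ
  -- constants
  set a : ℝ := (μ (A N)).toReal with hadef
  have ha : 0 < a := ENNReal.toReal_pos (hApos N).ne' (hAc N).measure_lt_top.ne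
  have hμSAfin : μ SA ≠ ⊤ := by rw [hμSA]; exact (hAc N).measure_lt_top.ne
  set K : Set G := SA ∪ (-SA) with hKdef
  have hK : IsCompact K := hSAc.union hSAc.neg
  set δ : ℝ := ε / (2 * (2 * C + 1)) with hδdef
  have hδ : 0 < δ := by positivity
  -- inner uniform bound
  have hinner : ∀ z : G, ‖(∫ u in SA, f (z + u) ∂μ) - (a : ℝ) • c‖ ≤ a * (ε / 2) := by
    intro z
    have h1 := hN z
    rw [dist_eq_norm, my_setIntegral_vadd' μ hfc (hAc N) z] at h1
    have h2 : (∫ u in SA, f (z + u) ∂μ) - (a : ℝ) • c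
        = (-a) • (c - a⁻¹ • ∫ u in SA, f (z + u) ∂μ) := by
      rw [smul_sub, smul_smul, neg_mul, mul_inv_cancel₀ ha.ne', neg_smul, neg_smul, one_smul]
      ring
    rw [h2, norm_smul, norm_neg, Real.norm_of_nonneg ha.le]
    exact mul_le_mul_of_nonneg_left h1.le ha.le
  -- boundary control
  have hbd : ∀ᶠ m in atTop,
      μ (vhBoundary K (B m)) / μ (B m) < ENNReal.ofReal δ :=
    (hBvh K hK) (Iio_mem_nhds (by simpa using hδ))
  filter_upwards [hbd] with m hbm
  -- real version of boundary control
  set b : ℝ := (μ (B m)).toReal with hbdef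
  have hb : 0 < b := ENNReal.toReal_pos (hBpos m).ne' (hBc m).measure_lt_top.ne
  have hBfin : μ (B m) ≠ ⊤ := (hBc m).measure_lt_top.ne
  have hdlt : μ (vhBoundary K (B m)) < ENNReal.ofReal δ * μ (B m) := by
    rwa [ENNReal.div_lt_iff (Or.inl (hBpos m).ne') (Or.inl hBfin)] at hbm
  have hdfin : μ (vhBoundary K (B m)) ≠ ⊤ :=
    (hdlt.trans (ENNReal.mul_lt_top ENNReal.ofReal_lt_top hBfin.lt_top)).ne
  have hdreal : (μ (vhBoundary K (B m))).toReal < δ * b := by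
    have := (ENNReal.toReal_lt_toReal hdfin
      (ENNReal.mul_lt_top ENNReal.ofReal_lt_top hBfin.lt_top).ne).2 hdlt
    rwa [ENNReal.toReal_mul, ENNReal.toReal_ofReal hδ.le] at this
  set β : ℝ := (μ (vhBoundary K (B m))).toReal with hβdef
  have hβ0 : 0 ≤ β := ENNReal.toReal_nonneg
  intro x
  -- closure of B m
  set SB : Set G := closure (B m) with hSBdef
  have hSBc : IsCompact SB := (hBc m).closure
  have hSBm : MeasurableSet SB := isClosed_closure.measurableSet
  have hμSB : μ SB = μ (B m) := (hBc m).measure_closure μ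
  have hμSBfin : μ SB ≠ ⊤ := by rw [hμSB]; exact hBfin
  -- finite measure instances
  haveI finA : IsFiniteMeasure (μ.restrict SA) :=
    ⟨by rw [Measure.restrict_apply_univ]; exact hμSAfin.lt_top⟩
  haveI finB : IsFiniteMeasure (μ.restrict SB) :=
    ⟨by rw [Measure.restrict_apply_univ]; exact hμSBfin.lt_top⟩
  set g : G → ℂ := fun t => f (x + t) with hgdef
  have hgc : Continuous g := hfc.comp (continuous_const.add continuous_id)
  have hgb : ∀ t, ‖g t‖ ≤ C := fun t => hfb _
  set I : ℂ := ∫ t in SB, g t ∂μ with hIdef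
  have hprod : Integrable (Function.uncurry fun t u => f (x + t + u))
      ((μ.restrict SB).prod (μ.restrict SA)) := by
    constructor
    · exact (hfc.comp ((continuous_const.add continuous_fst).add continuous_snd)
        ).aestronglyMeasurable
    · exact HasFiniteIntegral.of_bounded (C := C) (ae_of_all _ fun p => hfb _)
  set D : ℂ := ∫ t in SB, (∫ u in SA, f (x + t + u) ∂μ) ∂μ with hDdef
  -- Step A
  have hstepA : ‖D - (b * a) • c‖ ≤ a * (ε / 2) * b := by
    have hintinner : Integrable (fun t => ∫ u in SA, f (x + t + u) ∂μ)
        (μ.restrict SB) := hprod.integral_prod_left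
    have hconst : (∫ _ in SB, ((a : ℝ) • c) ∂μ) = (b * a) • c := by
      rw [setIntegral_const, smul_smul, measureReal_def, hμSB]
    have hsub : D - (b * a) • c
        = ∫ t in SB, ((∫ u in SA, f (x + t + u) ∂μ) - (a : ℝ) • c) ∂μ := by
      rw [integral_sub hintinner (integrable_const _), hconst]
    rw [hsub]
    have hle := norm_setIntegral_le_of_norm_le_const_ae' (μ := μ) (C := a * (ε / 2))
      hμSBfin.lt_top (ae_of_all _ (fun t _ => hinner (x + t)))
    calc ‖∫ t in SB, ((∫ u in SA, f (x + t + u) ∂μ) - (a : ℝ) • c) ∂μ‖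
        ≤ a * (ε / 2) * (μ SB).toReal := hle
      _ = a * (ε / 2) * b := by rw [hμSB]
  -- Step B: Fubini
  have hD2 : D = ∫ u in SA, (∫ t in SB, f (x + t + u) ∂μ) ∂μ :=
    integral_integral_swap hprod
  -- Step C
  have hstepC : ∀ u ∈ SA, ‖(∫ t in SB, f (x + t + u) ∂μ) - I‖ ≤ 2 * C * β := by
    intro u hu
    have huK : u ∈ K := Set.mem_union_left _ hu
    have hnuK : -u ∈ K := Set.mem_union_right _ (Set.neg_mem_neg.2 hu)
    have h1 : (∫ t in SB, f (x + t + u) ∂μ) = ∫ t in u +ᵥ SB, g t ∂μ := by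
      rw [my_setIntegral_vadd μ hgc hSBm u]
      apply setIntegral_congr_fun hSBm
      intro t _
      show f (x + t + u) = f (x + (u + t))
      congr 1; abel
    have hSm : MeasurableSet (u +ᵥ SB) := hSBm.const_vadd u
    have hμS : μ (u +ᵥ SB) ≠ ⊤ := by rw [measure_vadd]; exact hμSBfin
    have hgS : IntegrableOn g (u +ᵥ SB) μ :=
      my_integrableOn_of_bdd μ hgc.aestronglyMeasurable hgb hμS
    have hgT : IntegrableOn g SB μ :=
      my_integrableOn_of_bdd μ hgc.aestronglyMeasurable hgb hμSBfin
    rw [h1, hIdef, my_setIntegral_sub_decomp μ hSm hSBm hgS hgT]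
    -- subset facts
    have hsub1 : (u +ᵥ SB) \ SB ⊆ vhBoundary K (B m) := by
      rintro t ⟨ht1, ht2⟩
      obtain ⟨s, hs, rfl⟩ := ht1
      refine Or.inl ⟨?_, fun hmem => ht2 (subset_closure hmem)⟩
      show u + s ∈ closure (B m + K)
      have h3 : u + s = s + u := by abel
      rw [h3]
      exact map_mem_closure (f := fun y => y + u) (continuous_add_right u) hs
        (fun y hy => Set.add_mem_add hy huK)
    have hsub2 : SB \ (u +ᵥ SB) ⊆ vhBoundary K (B m) := by
      rintro t ⟨ht1, ht2⟩
      have htu : t - u ∉ SB := fun hmem => ht2 ⟨t - u, hmem, show u + (t - u) = t by abel⟩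
      have htu' : t - u ∈ (B m)ᶜ := fun hmem => htu (subset_closure hmem)
      exact Or.inr ⟨⟨t - u, htu', -u, hnuK, show t - u - -u = t by rw [sub_neg_eq_add, sub_add_cancel]⟩, ht1⟩
    have hb1 : ‖∫ t in (u +ᵥ SB) \ SB, g t ∂μ‖ ≤ C * β := by
      refine (norm_setIntegral_le_of_norm_le_const_ae' (μ := μ) (C := C)
        ((measure_mono hsub1).trans_lt hdfin.lt_top)
        (ae_of_all _ fun t _ => hgb t)).trans ?_
      exact mul_le_mul_of_nonneg_left
        (ENNReal.toReal_mono hdfin (measure_mono hsub1)) hC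
    have hb2 : ‖∫ t in SB \ (u +ᵥ SB), g t ∂μ‖ ≤ C * β := by
      refine (norm_setIntegral_le_of_norm_le_const_ae' (μ := μ) (C := C)
        ((measure_mono hsub2).trans_lt hdfin.lt_top)
        (ae_of_all _ fun t _ => hgb t)).trans ?_
      exact mul_le_mul_of_nonneg_left
        (ENNReal.toReal_mono hdfin (measure_mono hsub2)) hC
    calc ‖(∫ t in (u +ᵥ SB) \ SB, g t ∂μ) - ∫ t in SB \ (u +ᵥ SB), g t ∂μ‖
        ≤ ‖∫ t in (u +ᵥ SB) \ SB, g t ∂μ‖ + ‖∫ t in SB \ (u +ᵥ SB), g t ∂μ‖ :=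
          norm_sub_le _ _
      _ ≤ C * β + C * β := add_le_add hb1 hb2
      _ = 2 * C * β := by ring
  -- Step D
  have hstepD : ‖D - (a : ℝ) • I‖ ≤ 2 * C * β * a := by
    have hintout : Integrable (fun u => ∫ t in SB, f (x + t + u) ∂μ)
        (μ.restrict SA) := hprod.integral_prod_right
    have hconst : (∫ _ in SA, I ∂μ) = (a : ℝ) • I := by
      rw [setIntegral_const, measureReal_def, hμSA]
    have hsub : D - (a : ℝ) • I
        = ∫ u in SA, ((∫ t in SB, f (x + t + u) ∂μ) - I) ∂μ := by
      rw [hD2, integral_sub hintout (integrable_const _), hconst]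
    rw [hsub]
    have hle := norm_setIntegral_le_of_norm_le_const_ae' (μ := μ) (C := 2 * C * β)
      hμSAfin.lt_top (ae_of_all _ (fun u hu => hstepC u hu))
    calc ‖∫ u in SA, ((∫ t in SB, f (x + t + u) ∂μ) - I) ∂μ‖
        ≤ 2 * C * β * (μ SA).toReal := hle
      _ = 2 * C * β * a := by rw [hμSA]
  -- combine
  have hIc : ‖I - (b : ℝ) • c‖ ≤ 2 * C * β + (ε / 2) * b := by
    have key : a * ‖I - (b : ℝ) • c‖ ≤ 2 * C * β * a + a * (ε / 2) * b := by
      have heq : (a : ℝ) • (I - (b : ℝ) • c) = ((a : ℝ) • I - D) + (D - (b * a) • c) := by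
        rw [smul_sub, smul_smul, mul_comm b a]; ring
      have hD' : ‖(a : ℝ) • I - D‖ ≤ 2 * C * β * a := by
        rw [norm_sub_rev]; exact hstepD
      have := (norm_add_le ((a : ℝ) • I - D) (D - (b * a) • c)).trans
        (add_le_add hD' hstepA)
      rw [← heq, norm_smul, Real.norm_of_nonneg ha.le] at this
      exact this
    nlinarith [norm_nonneg (I - (b : ℝ) • c)]
  have hfinal : dist c ((μ (B m)).toReal⁻¹ • ∫ t in x +ᵥ B m, f t ∂μ) < ε := by
    rw [my_setIntegral_vadd' μ hfc (hBc m) x, dist_eq_norm]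
    have heq : c - (b : ℝ)⁻¹ • (∫ t in SB, f (x + t) ∂μ)
        = (b : ℝ)⁻¹ • ((b : ℝ) • c - I) := by
      rw [smul_sub, smul_smul, inv_mul_cancel₀ hb.ne', one_smul, hIdef]
    rw [show (μ (B m)).toReal = b from rfl, heq, norm_smul,
      Real.norm_of_nonneg (inv_nonneg.2 hb.le), norm_sub_rev]
    have hβb : 2 * C * β < (ε / 2) * b := by
      calc 2 * C * β ≤ (2 * C + 1) * β := by nlinarith
        _ < (2 * C + 1) * (δ * b) := by
            exact mul_lt_mul_of_pos_left hdreal (by positivity)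
        _ = (ε / 2) * b := by rw [hδdef]; field_simp
    calc (b : ℝ)⁻¹ * ‖I - (b : ℝ) • c‖ ≤ b⁻¹ * (2 * C * β + (ε / 2) * b) :=
          mul_le_mul_of_nonneg_left hIc (inv_nonneg.2 hb.le)
      _ < b⁻¹ * ((ε / 2) * b + (ε / 2) * b) := by
          exact mul_lt_mul_of_pos_left (by linarith) (inv_pos.2 hb)
      _ = ε := by field_simp; norm_num
  exact hfinal
end
end

section
/- Let f ∈ Cu(G), let χ be a character of G and let A be a van Hove sequence. If the Fourier–Bohr coefficient c_χ^A(f) exists uniformly, then for every van Hove sequence B the Fourier–Bohr coefficient c_χ^B(f) exists uniformly and c_χ^B(f) = c_χ^A(f). -/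
open MeasureTheory Filter Topology Pointwise ComplexConjugate
open scoped BigOperators

noncomputable section

variable {G : Type*} [AddCommGroup G] [UniformSpace G] [IsUniformAddGroup G]
  [LocallyCompactSpace G] [SecondCountableTopology G]
  [MeasurableSpace G] [BorelSpace G]

open scoped ENNReal

section FBHelpers

variable (μ : Measure G)

/-- For a compact set, restricting a Borel measure to the closure agrees with
restricting to the set itself (valid in any R₁ space). -/
lemma restrict_closure_of_isCompact {S : Set G} (hS : IsCompact S) :
    μ.restrict (closure S) = μ.restrict S := by
  ext E hE
  rw [Measure.restrict_apply hE, Measure.restrict_apply hE]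
  refine le_antisymm ?_ (measure_mono (Set.inter_subset_inter_right _ subset_closure))
  have hTm : MeasurableSet (toMeasurable μ (E ∩ S)) := measurableSet_toMeasurable _ _
  have hsub : E ∩ closure S ⊆ toMeasurable μ (E ∩ S) := by
    rintro x ⟨hxE, hxS⟩
    rw [hS.closure_eq_biUnion_inseparable] at hxS
    simp only [Set.mem_iUnion, Set.mem_setOf_eq] at hxS
    obtain ⟨y, hyS, hxy⟩ := hxS
    have hyE : y ∈ E := (hxy.symm.mem_measurableSet_iff hE).1 hxE
    have hyT : y ∈ toMeasurable μ (E ∩ S) := subset_toMeasurable _ _ ⟨hyE, hyS⟩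
    exact (hxy.symm.mem_measurableSet_iff hTm).2 hyT
  calc μ (E ∩ closure S) ≤ μ (toMeasurable μ (E ∩ S)) := measure_mono hsub
    _ = μ (E ∩ S) := measure_toMeasurable _

variable [μ.IsAddHaarMeasure]

/-- Translation of a set integral for a left-invariant measure. -/
lemma vadd_setIntegral (g : G → ℂ) (x : G) (S : Set G) :
    ∫ t in x +ᵥ S, g t ∂μ = ∫ u in S, g (x + u) ∂μ := by
  have hmp : MeasurePreserving (fun u : G => x + u) μ μ :=
    measurePreserving_add_left μ x
  have hemb : MeasurableEmbedding (fun u : G => x + u) :=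
    (Homeomorph.addLeft x).measurableEmbedding
  have hpre : (fun u : G => x + u) ⁻¹' (x +ᵥ S) = S := by
    have : x +ᵥ S = (fun u : G => x + u) '' S := by
      rw [← Set.image_vadd]; rfl
    rw [this, Set.preimage_image_eq _ (add_right_injective x)]
  have := hmp.setIntegral_preimage_emb hemb g (x +ᵥ S)
  rw [hpre] at this
  exact this.symm

lemma setIntegral_vadd_closure (g : G → ℂ) {S : Set G} (hS : IsCompact S) (x : G) :
    ∫ t in x +ᵥ closure S, g t ∂μ = ∫ t in x +ᵥ S, g t ∂μ := by
  have h1 : x +ᵥ closure S = closure (x +ᵥ S) := by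
    have := (Homeomorph.addLeft x).image_closure S
    rw [← Set.image_vadd, ← Set.image_vadd]
    exact this
  have h2 : IsCompact (x +ᵥ S) := by
    rw [← Set.image_vadd]
    exact hS.image (continuous_add_left x)
  rw [h1, restrict_closure_of_isCompact μ h2]

/-- Bounded continuous functions are integrable on finite-measure sets. -/
lemma integrableOn_of_bdd_s19 {g : G → ℂ} (hgc : Continuous g) {M : ℝ}
    (hM : ∀ t, ‖g t‖ ≤ M) {S : Set G} (hSf : μ S ≠ ∞) : IntegrableOn g S μ := by
  haveI : IsFiniteMeasure (μ.restrict S) :=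
    ⟨by rw [Measure.restrict_apply_univ]; exact hSf.lt_top⟩
  exact (integrable_const M).mono' hgc.aestronglyMeasurable.restrict
    (Eventually.of_forall hM)

/-- The difference of set integrals of a bounded function is controlled by the
measures of the set differences. -/
lemma setIntegral_diff_bound {g : G → ℂ} (hgc : Continuous g) {M : ℝ}
    (hM : ∀ t, ‖g t‖ ≤ M) {S T : Set G} (hSm : MeasurableSet S) (hTm : MeasurableSet T)
    (hSf : μ S ≠ ∞) (hTf : μ T ≠ ∞) :
    ‖(∫ t in S, g t ∂μ) - ∫ t in T, g t ∂μ‖ ≤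
      M * (μ (S \ T)).toReal + M * (μ (T \ S)).toReal := by
  have hST : μ (S \ T) ≠ ∞ := fun h => hSf (top_le_iff.1 (h ▸ measure_mono Set.diff_subset))
  have hTS : μ (T \ S) ≠ ∞ := fun h => hTf (top_le_iff.1 (h ▸ measure_mono Set.diff_subset))
  have hIST : μ (S ∩ T) ≠ ∞ := fun h => hSf (top_le_iff.1 (h ▸ measure_mono Set.inter_subset_left))
  have hi1 : IntegrableOn g (S ∩ T) μ := integrableOn_of_bdd_s19 μ hgc hM hIST
  have hi2 : IntegrableOn g (S \ T) μ := integrableOn_of_bdd_s19 μ hgc hM hST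
  have hi3 : IntegrableOn g (T \ S) μ := integrableOn_of_bdd_s19 μ hgc hM hTS
  have hSsplit : ∫ t in S, g t ∂μ = (∫ t in S ∩ T, g t ∂μ) + ∫ t in S \ T, g t ∂μ := by
    rw [← setIntegral_union (disjoint_sdiff_self_right.mono_left Set.inter_subset_right)
      (hSm.diff hTm) hi1 hi2, Set.inter_union_diff]
  have hTsplit : ∫ t in T, g t ∂μ = (∫ t in S ∩ T, g t ∂μ) + ∫ t in T \ S, g t ∂μ := by
    have hi1' : IntegrableOn g (T ∩ S) μ := by rwa [Set.inter_comm]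
    rw [Set.inter_comm, ← setIntegral_union (disjoint_sdiff_self_right.mono_left Set.inter_subset_right)
      (hTm.diff hSm) hi1' hi3, Set.inter_union_diff]
  have key : (∫ t in S, g t ∂μ) - ∫ t in T, g t ∂μ
      = (∫ t in S \ T, g t ∂μ) - ∫ t in T \ S, g t ∂μ := by
    rw [hSsplit, hTsplit]; ring
  rw [key]
  refine (norm_sub_le _ _).trans (add_le_add ?_ ?_)
  · exact norm_setIntegral_le_of_norm_le_const_ae' hST.lt_top
      (Eventually.of_forall fun t _ => hM t)
  · exact norm_setIntegral_le_of_norm_le_const_ae' hTS.lt_top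
      (Eventually.of_forall fun t _ => hM t)

end FBHelpers


lemma norm_sub_smul_eq {a : ℝ} (ha : 0 < a) (I z : ℂ) :
    ‖I - a • z‖ = a * ‖a⁻¹ • I - z‖ := by
  have hid : I - a • z = a • (a⁻¹ • I - z) := by
    rw [smul_sub, smul_smul, mul_inv_cancel₀ ha.ne', one_smul]
  rw [hid, norm_smul, Real.norm_eq_abs, abs_of_pos ha]

section FBKey

variable (μ : Measure G) [μ.IsAddHaarMeasure]

lemma vadd_closure_set (x : G) (S : Set G) : x +ᵥ closure S = closure (x +ᵥ S) := by
  have := (Homeomorph.addLeft x).image_closure S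
  rw [← Set.image_vadd, ← Set.image_vadd]
  exact this

/-- Key lemma: uniform averages along one van Hove sequence transfer to any other. -/
lemma fbKey (g : G → ℂ) (hgc : Continuous g) (M : ℝ) (hM0 : 0 < M)
    (hgM : ∀ t, ‖g t‖ ≤ M) (A : ℕ → Set G) (hA : IsVanHove μ A) (c : ℂ)
    (h : TendstoUniformly
      (fun n (x : G) => (μ (A n)).toReal⁻¹ • ∫ t in x +ᵥ A n, g t ∂μ) (fun _ => c) atTop)
    (B : ℕ → Set G) (hB : IsVanHove μ B) :
    TendstoUniformly
      (fun n (x : G) => (μ (B n)).toReal⁻¹ • ∫ t in x +ᵥ B n, g t ∂μ) (fun _ => c) atTop := by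
  rw [Metric.tendstoUniformly_iff] at h ⊢
  intro ε hε
  have hε' : (0:ℝ) < ε / 3 := by positivity
  obtain ⟨m, hm⟩ := (h (ε / 3) hε').exists
  -- closed version of `A m`
  set P : Set G := closure (A m) with hPdef
  have hPc : IsCompact P := (hA.1 m).closure
  have hPm : MeasurableSet P := isClosed_closure.measurableSet
  have hPμ : μ P = μ (A m) := (hA.1 m).measure_closure μ
  have hPfin : μ P ≠ ∞ := by rw [hPμ]; exact (hA.1 m).measure_lt_top.ne
  set a : ℝ := (μ P).toReal with hadef
  have ha : 0 < a := ENNReal.toReal_pos (by rw [hPμ]; exact (hA.2.1 m).ne') hPfin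
  have hm' : ∀ y : G, ‖(∫ t in y +ᵥ P, g t ∂μ) - a • c‖ ≤ a * (ε / 3) := by
    intro y
    have h1 := hm y
    rw [dist_eq_norm] at h1
    have h2 : ∫ t in y +ᵥ P, g t ∂μ = ∫ t in y +ᵥ A m, g t ∂μ :=
      setIntegral_vadd_closure μ g (hA.1 m) y
    have h3 : ‖a⁻¹ • (∫ t in y +ᵥ P, g t ∂μ) - c‖ < ε / 3 := by
      rw [norm_sub_rev, h2, hadef, hPμ]; exact h1
    rw [norm_sub_smul_eq ha]
    exact mul_le_mul_of_nonneg_left h3.le ha.le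
  set K : Set G := P ∪ (-P) with hKdef
  have hKc : IsCompact K := hPc.union hPc.neg
  have hδ : (0:ℝ≥0∞) < ENNReal.ofReal (ε / 3 / (2 * M)) := by
    rw [ENNReal.ofReal_pos]; positivity
  have hev : ∀ᶠ n in atTop,
      μ (vhBoundary K (B n)) / μ (B n) < ENNReal.ofReal (ε / 3 / (2 * M)) :=
    (hB.2.2 K hKc).eventually_lt_const hδ
  filter_upwards [hev] with n hn x
  -- closed version of `B n`
  have hBnc : IsCompact (B n) := hB.1 n
  set Q : Set G := closure (B n) with hQdef
  have hQc : IsCompact Q := hBnc.closure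
  have hQcl : IsClosed Q := isClosed_closure
  have hQm : MeasurableSet Q := hQcl.measurableSet
  have hQμ : μ Q = μ (B n) := hBnc.measure_closure μ
  have hQfin : μ Q ≠ ∞ := by rw [hQμ]; exact hBnc.measure_lt_top.ne
  set b : ℝ := (μ Q).toReal with hbdef
  have hb : 0 < b := ENNReal.toReal_pos (by rw [hQμ]; exact (hB.2.1 n).ne') hQfin
  -- boundary control
  set W : Set G := vhBoundary K (B n) with hWdef
  have hWfin : μ W ≠ ∞ := by
    have hsub : W ⊆ closure (B n + K) ∪ closure (B n) := by
      rintro v (hv | hv)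
      · exact Or.inl hv.1
      · exact Or.inr hv.2
    have hcomp : IsCompact (closure (B n + K) ∪ closure (B n)) :=
      (hBnc.add hKc).closure.union hBnc.closure
    exact ((measure_mono hsub).trans_lt hcomp.measure_lt_top).ne
  set E : ℝ := (μ W).toReal with hEdef
  have hE0 : (0:ℝ) ≤ E := ENNReal.toReal_nonneg
  have hEb : E / b < ε / 3 / (2 * M) := by
    have hne : μ W / μ (B n) ≠ ∞ := (ENNReal.div_lt_top hWfin (hB.2.1 n).ne').ne
    have h5 := (ENNReal.lt_ofReal_iff_toReal_lt hne).1 hn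
    rw [ENNReal.toReal_div] at h5
    rw [hbdef, hQμ]
    exact h5
  -- boundary inclusions
  have hincl1 : ∀ s ∈ P, μ ((s +ᵥ Q) \ Q) ≤ μ W := by
    intro s hs
    refine measure_mono ?_
    rintro v ⟨hv1, hv2⟩
    left
    constructor
    · have hvmem : v ∈ s +ᵥ closure (B n) := hv1
      rw [vadd_closure_set s (B n)] at hvmem
      refine closure_mono ?_ hvmem
      rintro u ⟨w, hw, rfl⟩
      exact Set.mem_add.2 ⟨w, hw, s, Or.inl hs, by simp [vadd_eq_add, add_comm]⟩
    · exact fun hvB => hv2 (subset_closure hvB)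
  have hincl2 : ∀ s ∈ P, μ (Q \ (s +ᵥ Q)) ≤ μ W := by
    intro s hs
    refine measure_mono ?_
    rintro v ⟨hv1, hv2⟩
    right
    refine ⟨?_, hv1⟩
    have hvs : v - s ∉ B n := by
      intro hmem
      exact hv2 ⟨v - s, subset_closure hmem, by simp⟩
    exact Set.mem_sub.2 ⟨v - s, hvs, -s, Or.inr (Set.neg_mem_neg.2 hs), by abel⟩
  -- integrability on the product
  haveI hPfm : IsFiniteMeasure (μ.restrict P) :=
    ⟨by rw [Measure.restrict_apply_univ]; exact hPfin.lt_top⟩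
  haveI hQfm : IsFiniteMeasure (μ.restrict Q) :=
    ⟨by rw [Measure.restrict_apply_univ]; exact hQfin.lt_top⟩
  have hΦ : Integrable (Function.uncurry fun s u => g ((x + u) + s))
      ((μ.restrict P).prod (μ.restrict Q)) := by
    refine (integrable_const M).mono' ?_ (Eventually.of_forall fun p => hgM _)
    exact (hgc.comp (by fun_prop)).aestronglyMeasurable
  -- Step A : inner averages over translates of Q are close to the average over Q
  have hq : ∀ s ∈ P,
      ‖(∫ u in Q, g ((x + u) + s) ∂μ) - ∫ u in Q, g (x + u) ∂μ‖ ≤ M * (2 * E) := by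
    intro s hs
    have harg : (fun u => g ((x + u) + s)) = fun u => g (x + (s + u)) := by
      funext u; congr 1; abel
    have hrw : ∫ u in Q, g ((x + u) + s) ∂μ = ∫ v in s +ᵥ Q, g (x + v) ∂μ := by
      rw [harg, ← vadd_setIntegral μ (fun v => g (x + v)) s Q]
    have hsQc : IsCompact (s +ᵥ Q) := by
      rw [← Set.image_vadd]; exact hQc.image (continuous_add_left s)
    have hsQm : MeasurableSet (s +ᵥ Q) := by
      have : IsClosed ((fun u : G => s + u) '' Q) :=
        (Homeomorph.addLeft s).isClosedMap _ hQcl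
      rw [← Set.image_vadd]; exact this.measurableSet
    have hsQfin : μ (s +ᵥ Q) ≠ ∞ := hsQc.measure_lt_top.ne
    have hbd := setIntegral_diff_bound μ (hgc.comp (continuous_add_left x))
      (fun t => hgM _) hsQm hQm hsQfin hQfin
    have hE1 : (μ ((s +ᵥ Q) \ Q)).toReal ≤ E := ENNReal.toReal_mono hWfin (hincl1 s hs)
    have hE2 : (μ (Q \ (s +ᵥ Q))).toReal ≤ E := ENNReal.toReal_mono hWfin (hincl2 s hs)
    rw [hrw]
    calc ‖(∫ v in s +ᵥ Q, g (x + v) ∂μ) - ∫ u in Q, g (x + u) ∂μ‖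
        ≤ M * (μ ((s +ᵥ Q) \ Q)).toReal + M * (μ (Q \ (s +ᵥ Q))).toReal := hbd
      _ ≤ M * E + M * E := add_le_add
          (mul_le_mul_of_nonneg_left hE1 hM0.le) (mul_le_mul_of_nonneg_left hE2 hM0.le)
      _ = M * (2 * E) := by ring
  -- Step B : compare the double integral with both single averages
  have hJint : Integrable (fun s => ∫ u in Q, g ((x + u) + s) ∂μ) (μ.restrict P) :=
    hΦ.integral_prod_left
  have hKint : Integrable (fun u => ∫ s in P, g ((x + u) + s) ∂μ) (μ.restrict Q) :=
    hΦ.integral_prod_right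
  have hDD1 : ‖(∫ s in P, (∫ u in Q, g ((x + u) + s) ∂μ) ∂μ)
      - a • ∫ u in Q, g (x + u) ∂μ‖ ≤ M * (2 * E) * a := by
    have hconst : IntegrableOn (fun _ : G => ∫ u in Q, g (x + u) ∂μ) P μ :=
      integrableOn_const hPfin
    have hsub : (∫ s in P, (∫ u in Q, g ((x + u) + s) ∂μ) ∂μ)
        - a • ∫ u in Q, g (x + u) ∂μ
        = ∫ s in P, ((∫ u in Q, g ((x + u) + s) ∂μ) - ∫ u in Q, g (x + u) ∂μ) ∂μ := by
      rw [integral_sub hJint hconst, setIntegral_const]; rfl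
    rw [hsub]
    exact norm_setIntegral_le_of_norm_le_const_ae' hPfin.lt_top
      (Eventually.of_forall hq)
  have hswap : (∫ s in P, (∫ u in Q, g ((x + u) + s) ∂μ) ∂μ)
      = ∫ u in Q, (∫ s in P, g ((x + u) + s) ∂μ) ∂μ :=
    integral_integral_swap hΦ
  have hDD2 : ‖(∫ u in Q, (∫ s in P, g ((x + u) + s) ∂μ) ∂μ) - b • (a • c)‖
      ≤ a * (ε / 3) * b := by
    have hconst : IntegrableOn (fun _ : G => a • c) Q μ :=
      integrableOn_const hQfin
    have hsub : (∫ u in Q, (∫ s in P, g ((x + u) + s) ∂μ) ∂μ) - b • (a • c)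
        = ∫ u in Q, ((∫ s in P, g ((x + u) + s) ∂μ) - a • c) ∂μ := by
      rw [integral_sub hKint hconst, setIntegral_const]; rfl
    rw [hsub]
    refine norm_setIntegral_le_of_norm_le_const_ae' hQfin.lt_top
      (Eventually.of_forall fun u _ => ?_)
    have h6 := hm' (x + u)
    rwa [vadd_setIntegral μ g (x + u) P] at h6
  -- assemble the estimate
  have htri : ‖a • (∫ u in Q, g (x + u) ∂μ) - b • (a • c)‖
      ≤ M * (2 * E) * a + a * (ε / 3) * b := by
    have hid : a • (∫ u in Q, g (x + u) ∂μ) - b • (a • c)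
        = ((∫ s in P, (∫ u in Q, g ((x + u) + s) ∂μ) ∂μ) - b • (a • c))
          - ((∫ s in P, (∫ u in Q, g ((x + u) + s) ∂μ) ∂μ)
            - a • ∫ u in Q, g (x + u) ∂μ) := by abel
    have hDD2' : ‖(∫ s in P, (∫ u in Q, g ((x + u) + s) ∂μ) ∂μ) - b • (a • c)‖
        ≤ a * (ε / 3) * b := by rw [hswap]; exact hDD2
    rw [hid]
    have := norm_sub_le ((∫ s in P, (∫ u in Q, g ((x + u) + s) ∂μ) ∂μ) - b • (a • c))
      ((∫ s in P, (∫ u in Q, g ((x + u) + s) ∂μ) ∂μ) - a • ∫ u in Q, g (x + u) ∂μ)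
    linarith
  -- final computation
  have hLHS : ∫ t in x +ᵥ B n, g t ∂μ = ∫ u in Q, g (x + u) ∂μ := by
    rw [← setIntegral_vadd_closure μ g hBnc x, ← hQdef, vadd_setIntegral μ g x Q]
  rw [dist_eq_norm, norm_sub_rev, hLHS]
  have hBQ : (μ (B n)).toReal = b := by rw [hbdef, hQμ]
  rw [hBQ]
  -- ‖b⁻¹ • I - c‖ bound
  have hmain : ‖b⁻¹ • (∫ u in Q, g (x + u) ∂μ) - c‖
      ≤ (M * (2 * E) * a + a * (ε / 3) * b) / (a * b) := by
    have h7 : ‖a • (∫ u in Q, g (x + u) ∂μ) - b • (a • c)‖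
        = (a * b) * ‖b⁻¹ • (∫ u in Q, g (x + u) ∂μ) - c‖ := by
      have hone : a • (∫ u in Q, g (x + u) ∂μ) - b • (a • c)
          = (a * b) • (b⁻¹ • (∫ u in Q, g (x + u) ∂μ) - c) := by
        rw [smul_sub, smul_smul, smul_smul]
        congr 2
        · field_simp
        · ring
      rw [hone, norm_smul, Real.norm_eq_abs, abs_of_pos (mul_pos ha hb)]
    rw [le_div_iff₀ (mul_pos ha hb), mul_comm _ (a * b), ← h7]
    exact htri
  have harith : (M * (2 * E) * a + a * (ε / 3) * b) / (a * b)
      = 2 * M * (E / b) + ε / 3 := by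
    field_simp
  have hlt : 2 * M * (E / b) < ε / 3 := by
    have h8 : 2 * M * (E / b) < 2 * M * (ε / 3 / (2 * M)) :=
      mul_lt_mul_of_pos_left hEb (by positivity)
    have h9 : 2 * M * (ε / 3 / (2 * M)) = ε / 3 := by field_simp
    linarith
  calc ‖b⁻¹ • (∫ u in Q, g (x + u) ∂μ) - c‖
      ≤ (M * (2 * E) * a + a * (ε / 3) * b) / (a * b) := hmain
    _ = 2 * M * (E / b) + ε / 3 := harith
    _ < ε / 3 + ε / 3 := by linarith
    _ < ε := by linarith

end FBKey

/-- if `c_χ^A(f)` exists uniformly then, for every van Hove sequence `B`,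
`c_χ^B(f)` exists uniformly with the same value. -/
theorem stmt19 (μ : Measure G) [μ.IsAddHaarMeasure] (A : ℕ → Set G)
    (hA : IsVanHove μ A) (f χ : G → ℂ) (hf : IsCu f) (hχ : IsChar χ) (c : ℂ)
    (h : FBUniform μ A χ f c) :
    ∀ B : ℕ → Set G, IsVanHove μ B → FBUniform μ B χ f c := by
  obtain ⟨hfu, C, hC⟩ := hf
  obtain ⟨hχc, hχ1, -⟩ := hχ
  have hgc : Continuous (fun t => conj (χ t) * f t) := by
    have h1 : Continuous (fun t => (conj (χ t) : ℂ)) := by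
      exact Complex.continuous_conj.comp hχc
    exact h1.mul hfu.continuous
  have hM0 : (0:ℝ) < max C 1 := lt_of_lt_of_le one_pos (le_max_right _ _)
  have hgM : ∀ t, ‖conj (χ t) * f t‖ ≤ max C 1 := by
    intro t
    calc ‖conj (χ t) * f t‖ = ‖(conj (χ t) : ℂ)‖ * ‖f t‖ := norm_mul _ _
      _ = ‖f t‖ := by rw [RCLike.norm_conj, hχ1 t, one_mul]
      _ ≤ max C 1 := (hC t).trans (le_max_left _ _)
  intro B hB
  exact fbKey μ (fun t => conj (χ t) * f t) hgc (max C 1) hM0 hgM A hA c h B hB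
end
end
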